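/- arXiv:2103.09333 — 3 statements merged into one kernel-verified Lean document; each statement's English description precedes it below -/
import Mathlib

section
/- For every zigzag language L_n ⊆ S_n, the sequence J(L_n) contains every permutation of L_n exactly once; in particular, J(L_n) has length |L_n|. -/
/-!
Shared definitions: permutations in one-line notation as lists of naturals,
deletion `p`, insertion `c_i`, zigzag languages, the Gray code sequence `J(L_n)`,
jumps, minimal jumps, the auxiliary sequences `s_n^π`, Algorithm M,
vincular pattern containment and 2-clumped permutations.
-/

/-- `S_n`: permutations of `{1,…,n}` in one-line notation, as lists of naturals. -/
def SymmList (n : ℕ) : Set (List ℕ) := {l | List.Perm l (List.range' 1 n)}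

/-- The identity permutation `id_n = 1 2 ⋯ n`. -/
def idPerm (n : ℕ) : List ℕ := List.range' 1 n

/-- `p(π)`: delete the largest entry `n = π.length` from the permutation `π ∈ S_n`. -/
def pdel (l : List ℕ) : List ℕ := l.erase l.length

/-- `c_i(π)`: insert the new largest value `π.length + 1` at (1-indexed) position `i`. -/
def cins (i : ℕ) (l : List ℕ) : List ℕ :=
  l.take (i - 1) ++ (l.length + 1) :: l.drop (i - 1)

/-- Zigzag languages of permutations: `L_0 = {ε}` is a zigzag language, and
`L ⊆ S_{n+1}` is a zigzag language if `p(L)` is a zigzag language and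
`c_1(π), c_{n+1}(π) ∈ L` for every `π ∈ p(L)`. -/
inductive IsZigzag : ℕ → Set (List ℕ) → Prop
  | zero : IsZigzag 0 {[]}
  | succ (n : ℕ) (L : Set (List ℕ)) :
      L ⊆ SymmList (n + 1) →
      IsZigzag n (pdel '' L) →
      (∀ l ∈ pdel '' L, cins 1 l ∈ L ∧ cins (n + 1) l ∈ L) →
      IsZigzag (n + 1) L

/-- `→c(π)`: the sequence of those `c_1(π),…,c_n(π)` lying in `L`,
in increasing order of the insertion position. -/
noncomputable def cSeq (L : Set (List ℕ)) (n : ℕ) (l : List ℕ) : List (List ℕ) :=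
  ((List.range' 1 n).map (fun i => cins i l)).filter
    (fun x => @decide (x ∈ L) (Classical.propDecidable _))

/-- The Gray code sequence `J(L_n)` of a language `L ⊆ S_n`:
`J(L_0) = ε`, and `J(L_{n+1})` is obtained from `J(L_n)` (for the language
`p(L)`) by replacing its entries alternately by `←c(π)` (the reverse of
`→c(π)`) and `→c(π)`. -/
noncomputable def Jseq : ℕ → Set (List ℕ) → List (List ℕ)
  | 0, _ => [[]]
  | (n + 1), L =>
      (((Jseq n (pdel '' L)).mapIdx
        (fun k π => if k % 2 = 0 then (cSeq L (n + 1) π).reverse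
                    else cSeq L (n + 1) π)).flatten)

/-- `ρ` is obtained from `π` by a right jump of the value `v` by `d` steps. -/
def RightJump (π ρ : List ℕ) (v d : ℕ) : Prop :=
  0 < d ∧ ∃ A B C : List ℕ, B.length = d ∧ (∀ x ∈ B, x < v) ∧
    π = A ++ v :: (B ++ C) ∧ ρ = A ++ (B ++ v :: C)

/-- `ρ` is obtained from `π` by a left jump of the value `v` by `d` steps. -/
def LeftJump (π ρ : List ℕ) (v d : ℕ) : Prop := RightJump ρ π v d

/-- A right jump that is minimal with respect to `L`: every right jump of the
same value by fewer steps yields a permutation not in `L`. -/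
def MinimalRightJump (L : Set (List ℕ)) (π ρ : List ℕ) (v d : ℕ) : Prop :=
  RightJump π ρ v d ∧ ∀ d' ρ', d' < d → RightJump π ρ' v d' → ρ' ∉ L

/-- A left jump that is minimal with respect to `L`. -/
def MinimalLeftJump (L : Set (List ℕ)) (π ρ : List ℕ) (v d : ℕ) : Prop :=
  LeftJump π ρ v d ∧ ∀ d' ρ', d' < d → LeftJump π ρ' v d' → ρ' ∉ L

/-- The auxiliary sequence `s_n^π` of a permutation `π` occurring in `J(L_n)`,
as a function of the index `i ∈ {1,…,n}` (value `0` outside this range). -/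
noncomputable def sVec : ℕ → Set (List ℕ) → List ℕ → ℕ → ℕ
  | 0, _, _, _ => 0
  | 1, _, _, i => if i = 1 then 1 else 0
  | (n + 2), L, π, i =>
      let L' := pdel '' L
      let π' := pdel π
      let cbar := if ((Jseq (n + 1) L').idxOf π') % 2 = 0
                  then (cSeq L (n + 2) π').reverse else cSeq L (n + 2) π'
      if cbar.getLast? = some π then
        (if i ≤ n then sVec (n + 1) L' π' i
         else if i = n + 1 then n + 1
         else if i = n + 2 then sVec (n + 1) L' π' (n + 1) else 0)
      else
        (if i ≤ n + 1 then sVec (n + 1) L' π' i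
         else if i = n + 2 then n + 2 else 0)

/-- `j` is at the first position of `l`, or the entry immediately left of `j`
in `l` is larger than `j`. -/
def AtLeftTurn (l : List ℕ) (j : ℕ) : Prop :=
  ∃ A B : List ℕ, l = A ++ j :: B ∧ (A = [] ∨ ∃ x, A.getLast? = some x ∧ j < x)

/-- `j` is at the last position of `l`, or the entry immediately right of `j`
in `l` is larger than `j`. -/
def AtRightTurn (l : List ℕ) (j : ℕ) : Prop :=
  ∃ A B : List ℕ, l = A ++ j :: B ∧ (B = [] ∨ ∃ x, B.head? = some x ∧ j < x)

/-- `j` is not at the first position of `l`, and the entry immediately left of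
`j` in `l` is smaller than `j`. -/
def SmallerLeftNeighbor (l : List ℕ) (j : ℕ) : Prop :=
  ∃ A B : List ℕ, ∃ x, l = A ++ j :: B ∧ A.getLast? = some x ∧ x < j

/-- `j` is not at the last position of `l`, and the entry immediately right of
`j` in `l` is smaller than `j`. -/
def SmallerRightNeighbor (l : List ℕ) (j : ℕ) : Prop :=
  ∃ A B : List ℕ, ∃ x, l = A ++ j :: B ∧ B.head? = some x ∧ x < j

/-- A state of Algorithm M: the current permutation `π` and the auxiliary
arrays `o` and `s`; `o j = false` encodes direction `L` (left) and
`o j = true` encodes `R` (right). -/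
structure MState where
  perm : List ℕ
  o : ℕ → Bool
  s : ℕ → ℕ

/-- The initial state of Algorithm M (step M1): `π = id_n`, `o_j = L`, `s_j = j`. -/
def MInit (n : ℕ) : MState := ⟨idPerm n, fun _ => false, fun j => j⟩

/-- One iteration (steps M3–M5) of Algorithm M on a language `L ⊆ S_n`:
with `j := s_n ≠ 1`, the permutation jumps minimally in the direction `o_j`
(step M4), and the arrays `o`, `s` are updated as in step M5. -/
def MStep (L : Set (List ℕ)) (n : ℕ) (σ σ' : MState) : Prop :=
  σ.s n ≠ 1 ∧
  σ'.perm ∈ L ∧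
  ((σ.o (σ.s n) = false ∧ ∃ d, MinimalLeftJump L σ.perm σ'.perm (σ.s n) d) ∨
   (σ.o (σ.s n) = true ∧ ∃ d, MinimalRightJump L σ.perm σ'.perm (σ.s n) d)) ∧
  (((σ.o (σ.s n) = false ∧ AtLeftTurn σ'.perm (σ.s n)) ∨
    (σ.o (σ.s n) = true ∧ AtRightTurn σ'.perm (σ.s n))) →
      σ'.o = Function.update σ.o (σ.s n) (!σ.o (σ.s n)) ∧
      σ'.s = Function.update (Function.update (Function.update σ.s n n) (σ.s n)
               ((Function.update σ.s n n) (σ.s n - 1))) (σ.s n - 1) (σ.s n - 1)) ∧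
  (¬ ((σ.o (σ.s n) = false ∧ AtLeftTurn σ'.perm (σ.s n)) ∨
      (σ.o (σ.s n) = true ∧ AtRightTurn σ'.perm (σ.s n))) →
      σ'.o = σ.o ∧ σ'.s = Function.update σ.s n n)

/-- `π` contains the vincular pattern `pat` whose marked adjacent pair starts
at (0-indexed) position `k` of `pat`. -/
def ContainsVincular (π pat : List ℕ) (k : ℕ) : Prop :=
  ∃ f : ℕ → ℕ, StrictMonoOn f (Set.Iio pat.length) ∧
    (∀ i < pat.length, f i < π.length) ∧
    f (k + 1) = f k + 1 ∧
    (∀ i < pat.length, ∀ j < pat.length,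
      (pat.getD i 0 < pat.getD j 0 ↔ π.getD (f i) 0 < π.getD (f j) 0))

/-- 2-clumped permutations: those avoiding the vincular patterns
`3(51)24`, `3(51)42`, `24(51)3` and `42(51)3`. -/
def TwoClumped (π : List ℕ) : Prop :=
  ¬ ContainsVincular π [3, 5, 1, 2, 4] 1 ∧ ¬ ContainsVincular π [3, 5, 1, 4, 2] 1 ∧
  ¬ ContainsVincular π [2, 4, 5, 1, 3] 2 ∧ ¬ ContainsVincular π [4, 2, 5, 1, 3] 2

/-- `S'_n`: the set of 2-clumped permutations in `S_n`. -/
def SClump (n : ℕ) : Set (List ℕ) := {l ∈ SymmList n | TwoClumped l}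

/-- `B_n`: the permutations obtained from `1` by repeatedly inserting the new
largest value at the first or the last position. -/
def Bset : ℕ → Set (List ℕ)
  | 0 => {[]}
  | 1 => {[1]}
  | (n + 2) => {l | ∃ π ∈ Bset (n + 1), l = cins 1 π ∨ l = cins (n + 2) π}


lemma symm_length {n : ℕ} {l : List ℕ} (h : l ∈ SymmList n) : l.length = n := by
  simpa using h.length_eq

lemma symm_not_mem {n : ℕ} {l : List ℕ} (h : l ∈ SymmList n) : n + 1 ∉ l := by
  intro hm
  have := h.mem_iff.mp hm
  simp [List.mem_range'_1] at this
  omega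

lemma cins_length (i : ℕ) (l : List ℕ) : (cins i l).length = l.length + 1 := by
  simp [cins]
  omega

lemma pdel_cins {l : List ℕ} (h : l.length + 1 ∉ l) (i : ℕ) : pdel (cins i l) = l := by
  have ht : l.length + 1 ∉ l.take (i-1) := fun hm => h (List.mem_of_mem_take hm)
  rw [pdel, cins_length]
  rw [cins, List.erase_append_right _ ht, List.erase_cons_head, List.take_append_drop]

lemma pdel_symm {n : ℕ} {l : List ℕ} (h : l ∈ SymmList (n+1)) : pdel l ∈ SymmList n := by
  have hlen := symm_length h
  have heq : pdel l = l.erase (n+1) := by rw [pdel, hlen]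
  rw [SymmList, Set.mem_setOf_eq, heq]
  have h2 : (List.range' 1 (n+1)).erase (n+1) = List.range' 1 n := by
    rw [List.range'_concat, List.erase_append_right]
    · have : 1 + 1 * n = n + 1 := by omega
      rw [this, List.erase_cons_head]
      simp
    · intro hm
      simp [List.mem_range'_1] at hm; omega
  exact h2 ▸ h.erase _

lemma exists_cins {n : ℕ} {σ : List ℕ} (h : σ ∈ SymmList (n+1)) :
    ∃ i, 1 ≤ i ∧ i ≤ n + 1 ∧ cins i (pdel σ) = σ := by
  have hlen := symm_length h
  have hmem : n + 1 ∈ σ := h.mem_iff.mpr (by simp [List.mem_range'_1])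
  have hcount : σ.count (n+1) = 1 := by
    rw [h.count_eq]
    exact List.count_eq_one_of_mem (List.nodup_range' (s := 1) (n := n+1)) (by simp [List.mem_range'_1])
  obtain ⟨A, B, hAB⟩ := List.append_of_mem hmem
  have hA : (n+1) ∉ A ∧ (n+1) ∉ B := by
    rw [hAB] at hcount
    simp [List.count_append, List.count_cons] at hcount
    constructor <;> (rw [← List.count_eq_zero]; omega)
  have hpdel : pdel σ = A ++ B := by
    rw [pdel, hlen, hAB, List.erase_append_right _ hA.1, List.erase_cons_head]
  have hABlen : A.length + B.length = n := by
    have := hlen; rw [hAB] at this; simp at this; omega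
  refine ⟨A.length + 1, by omega, by omega, ?_⟩
  rw [hpdel, cins]
  simp only [Nat.add_sub_cancel]
  rw [List.take_left, List.drop_left]
  rw [hAB]
  congr 2
  simp; omega

lemma cins_inj {l : List ℕ} (hnm : l.length + 1 ∉ l) {i j : ℕ}
    (hi1 : 1 ≤ i) (hi2 : i ≤ l.length + 1) (hj1 : 1 ≤ j) (hj2 : j ≤ l.length + 1)
    (h : cins i l = cins j l) : i = j := by
  by_contra hne
  -- wlog i < j
  wlog hij : i < j generalizing i j
  · exact this hj1 hj2 hi1 hi2 h.symm (Ne.symm hne) (by omega)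
  have hti : (l.take (i-1)).length = i - 1 := by simp; omega
  have htj : (l.take (j-1)).length = j - 1 := by simp; omega
  have h1 : (cins i l)[i-1]? = some (l.length + 1) := by
    rw [cins, List.getElem?_append_right (by omega : (l.take (i-1)).length ≤ i - 1)]
    rw [hti]
    simp
  have h2 : (cins j l)[i-1]? = some (l[i-1]'(by omega)) := by
    rw [cins, List.getElem?_append, if_pos (by omega : i - 1 < (l.take (j-1)).length)]
    rw [List.getElem?_take, if_pos (by omega), List.getElem?_eq_getElem (by omega)]
  rw [h, h2] at h1
  have : l[i-1]'(by omega) = l.length + 1 := by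
    simpa using h1
  exact hnm (this ▸ List.getElem_mem _)

lemma instEqL : (List.instBEq : BEq (List ℕ)) = instBEqOfDecidableEq :=
  lawful_beq_subsingleton _ _

lemma sum_count_mapIdx (σ : List ℕ) (F : List ℕ → List (List ℕ)) :
    ∀ (l : List (List ℕ)) (f : ℕ → List ℕ → List (List ℕ)),
      (∀ k π, (f k π).count σ = (F π).count σ) →
      ((l.mapIdx f).map (List.count σ)).sum = (l.map fun π => (F π).count σ).sum
  | [], _, _ => by simp
  | (a :: l), f, h => by
      rw [List.mapIdx_cons]
      simp only [List.map_cons, List.sum_cons, h 0 a]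
      rw [sum_count_mapIdx σ F l _ (fun k π => h (k+1) π)]

lemma mem_mapIdx' {α β : Type*} (x : β) :
    ∀ (l : List α) (f : ℕ → α → β), x ∈ l.mapIdx f → ∃ k a, a ∈ l ∧ x = f k a
  | [], _, h => by simp [List.mapIdx_nil] at h
  | (a :: l), f, h => by
      rw [List.mapIdx_cons] at h
      rcases List.mem_cons.mp h with h | h
      · exact ⟨0, a, List.mem_cons_self, h⟩
      · obtain ⟨k, b, hb, hx⟩ := mem_mapIdx' x l _ h
        exact ⟨k + 1, b, List.mem_cons_of_mem _ hb, hx⟩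

lemma count_eq_sum_if (a : List ℕ) :
    ∀ l : List (List ℕ), (l.map fun x => if a = x then 1 else 0).sum = l.count a
  | [] => by simp
  | x :: l => by
      simp only [List.map_cons, List.sum_cons, List.count_cons, count_eq_sum_if a l]
      rcases eq_or_ne x a with rfl | h
      · rw [if_pos rfl, if_pos (by simp)]
        omega
      · simp [h, Ne.symm h]

lemma count_cSeq {n : ℕ} {L : Set (List ℕ)} (hsub : L ⊆ SymmList (n+1))
    {σ : List ℕ} (hσ : σ ∈ L) {π' : List ℕ} (hπ' : π' ∈ SymmList n) :
    (cSeq L (n+1) π').count σ = if pdel σ = π' then 1 else 0 := by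
  have hlen' : π'.length = n := symm_length hπ'
  have hnm : π'.length + 1 ∉ π' := by rw [hlen']; exact symm_not_mem hπ'
  have hndM : (((List.range' 1 (n+1)).map (fun i => cins i π')).Nodup) := by
    refine List.Nodup.map_on ?_ (List.nodup_range' (s := 1) (n := n+1))
    intro i hi j hj hEq
    rw [List.mem_range'_1] at hi hj
    exact cins_inj hnm hi.1 (by omega) hj.1 (by omega) hEq
  have hnd : (cSeq L (n+1) π').Nodup := hndM.filter _
  have hmem : σ ∈ cSeq L (n+1) π' ↔ pdel σ = π' := by
    constructor
    · intro hm
      rw [cSeq, List.mem_filter] at hm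
      obtain ⟨i, _, rfl⟩ := List.mem_map.mp hm.1
      exact pdel_cins hnm i
    · intro hpd
      obtain ⟨i, hi1, hi2, hic⟩ := exists_cins (hsub hσ)
      rw [hpd] at hic
      rw [cSeq, List.mem_filter]
      refine ⟨List.mem_map.mpr ⟨i, List.mem_range'_1.mpr ⟨hi1, by omega⟩, hic⟩, ?_⟩
      exact @decide_eq_true _ (Classical.propDecidable _) hσ
  split
  case isTrue h => exact List.count_eq_one_of_mem hnd (hmem.mpr h)
  case isFalse h =>
    exact List.count_eq_zero.mpr
      (fun hm => h (hmem.mp hm))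

lemma mem_Jseq : ∀ {n : ℕ} {L : Set (List ℕ)}, IsZigzag n L → ∀ x ∈ Jseq n L, x ∈ L := by
  intro n L h
  cases h with
  | zero =>
      intro x hx
      simp only [Jseq, List.mem_singleton] at hx
      simp [hx]
  | succ n L hsub hz hc =>
      intro x hx
      rw [Jseq, List.mem_flatten] at hx
      obtain ⟨b, hb, hxb⟩ := hx
      obtain ⟨k, a, _, rfl⟩ := mem_mapIdx' b _ _ hb
      have hxc : x ∈ cSeq L (n+1) a := by
        split at hxb
        · exact List.mem_reverse.mp hxb
        · exact hxb
      rw [cSeq, List.mem_filter] at hxc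
      exact @of_decide_eq_true _ (Classical.propDecidable _) hxc.2

/-- For every zigzag language `L_n ⊆ S_n`, the sequence `J(L_n)`
contains every permutation of `L_n` exactly once; in particular, `J(L_n)` has
length `|L_n|`. -/
theorem Jseq_visits_each_exactly_once (n : ℕ) (L : Set (List ℕ)) (hL : IsZigzag n L) :
    (∀ π ∈ L, (Jseq n L).count π = 1) ∧ (Jseq n L).length = L.ncard := by
  have main : ∀ n L, IsZigzag n L → ∀ π ∈ L, (Jseq n L).count π = 1 := by
    intro n L hL
    induction hL with
    | zero =>
        intro π hπ
        simp only [Set.mem_singleton_iff] at hπ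
        simp [Jseq, hπ]
    | succ n L hsub hz hc IH =>
        intro σ hσ
        have hpσ : pdel σ ∈ pdel '' L := Set.mem_image_of_mem _ hσ
        rw [Jseq, List.count_flatten]
        rw [sum_count_mapIdx σ (cSeq L (n+1)) (Jseq n (pdel '' L))
          (fun k π => if k % 2 = 0 then (cSeq L (n+1) π).reverse else cSeq L (n+1) π)
          (fun k π => by split <;> simp)]
        have hmap : ((Jseq n (pdel '' L)).map fun π' => (cSeq L (n+1) π').count σ)
            = ((Jseq n (pdel '' L)).map fun π' => if pdel σ = π' then 1 else 0) := by
          apply List.map_congr_left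
          intro π' hπ'
          have hπ'L : π' ∈ pdel '' L := mem_Jseq hz π' hπ'
          have hπ'S : π' ∈ SymmList n := by
            obtain ⟨τ, hτ, rfl⟩ := hπ'L
            exact pdel_symm (hsub hτ)
          exact count_cSeq hsub hσ hπ'S
        rw [hmap, count_eq_sum_if]
        exact IH _ hpσ
  refine ⟨main n L hL, ?_⟩
  have hmem := mem_Jseq hL
  have hnd : (Jseq n L).Nodup := by
    rw [List.nodup_iff_count_le_one]
    intro a
    by_cases ha : a ∈ Jseq n L
    · rw [main n L hL a (hmem a ha)]
    · rw [List.count_eq_zero.mpr ha]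
      omega
  have hset : L = ↑(Jseq n L).toFinset := by
    ext x
    simp only [List.coe_toFinset, Set.mem_setOf_eq]
    constructor
    · intro hx
      have h1 := main n L hL x hx
      have h2 : 0 < (Jseq n L).count x := by omega
      exact List.count_pos_iff.mp h2
    · exact hmem x
  have hcard : L.ncard = (Jseq n L).toFinset.card := by
    conv_lhs => rw [hset]
    rw [Set.ncard_coe_finset]
  rw [hcard, List.toFinset_card_of_nodup hnd]
end

section
/- For every zigzag language L_n ⊆ S_n with n ≥ 1, Algorithm M is well defined (in every execution of step M4 the prescribed minimal jump exists and produces a permutation of L_n), it terminates, and the permutations visited in step M2, in order, form exactly the sequence J(L_n); in particular, Algorithm M visits every permutation of L_n exactly once. -/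
namespace ZZ

lemma symm_length {n : ℕ} {l : List ℕ} (h : l ∈ SymmList n) : l.length = n := by
  simpa using h.length_eq
lemma symm_mem {n : ℕ} {l : List ℕ} (h : l ∈ SymmList n) {x : ℕ} (hx : x ∈ l) :
    1 ≤ x ∧ x ≤ n := by
  have := h.mem_iff.1 hx
  rw [List.mem_range'_1] at this
  omega
lemma symm_nodup {n : ℕ} {l : List ℕ} (h : l ∈ SymmList n) : l.Nodup := by
  have : (List.range' 1 n).Nodup := List.nodup_range'
  exact h.nodup_iff.2 this

lemma cins_one {l : List ℕ} : cins 1 l = (l.length + 1) :: l := by simp [cins]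

lemma cins_top {m : ℕ} {l : List ℕ} (h : l.length = m) : cins (m + 1) l = l ++ [m + 1] := by
  rw [cins, h, Nat.add_sub_cancel, List.take_of_length_le h.le, List.drop_eq_nil_of_le h.le]


/-- Splitting around a unique occurrence. -/
lemma append_cons_eq {v : ℕ} : ∀ {A A' B B' : List ℕ},
    A ++ v :: B = A' ++ v :: B' → v ∉ A → v ∉ A' → A = A' ∧ B = B' := by
  intro A
  induction A with
  | nil =>
    intro A' B B' h hA hA'
    cases A' with
    | nil => simp_all
    | cons a t =>
      simp only [List.nil_append, List.cons_append, List.cons.injEq] at h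
      exact absurd (h.1 ▸ List.mem_cons_self (a := a) (l := t)) hA'
  | cons a t ih =>
    intro A' B B' h hA hA'
    cases A' with
    | nil =>
      simp only [List.nil_append, List.cons_append, List.cons.injEq] at h
      exact absurd (h.1 ▸ List.mem_cons_self (a := a) (l := t)) hA
    | cons a' t' =>
      simp only [List.cons_append, List.cons.injEq] at h
      have hA1 : v ∉ t := fun hh => hA (List.mem_cons_of_mem _ hh)
      have hA2 : v ∉ t' := fun hh => hA' (List.mem_cons_of_mem _ hh)
      obtain ⟨h1, h2⟩ := ih h.2 hA1 hA2
      exact ⟨by rw [h.1, h1], h2⟩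

lemma rightJump_perm {π ρ : List ℕ} {v d : ℕ} (h : RightJump π ρ v d) : ρ.Perm π := by
  obtain ⟨-, A, B, C, -, -, hπ, hρ⟩ := h
  rw [hπ, hρ]
  exact List.Perm.append_left A (List.perm_middle.trans (List.Perm.cons _ (List.Perm.refl _)))

lemma cins_mem_symm {m i : ℕ} {l : List ℕ} (h : l ∈ SymmList m) :
    cins i l ∈ SymmList (m + 1) := by
  have hlen := symm_length h
  show List.Perm _ _
  have h1 : List.Perm (cins i l) ((m+1) :: l) := by
    rw [cins, hlen]
    have := List.perm_middle (a := m+1) (l₁ := l.take (i-1)) (l₂ := l.drop (i-1))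
    rwa [List.take_append_drop] at this
  have h2 : List.Perm ((m+1) :: l) ((m+1) :: List.range' 1 m) := h.cons _
  have h3 : List.Perm ((m+1) :: List.range' 1 m) (List.range' 1 (m+1)) := by
    have he : List.range' 1 (m+1) = List.range' 1 m ++ [1 + 1 * m] := List.range'_concat (s := 1) (n := m)
    rw [he]
    simpa [Nat.add_comm] using (List.perm_append_comm (l₁ := [m+1]) (l₂ := List.range' 1 m))
  exact (h1.trans h2).trans h3

lemma pdel_cins {m i : ℕ} {l : List ℕ} (h : l ∈ SymmList m) : pdel (cins i l) = l := by
  have hlen := symm_length h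
  have hlc : (cins i l).length = m + 1 := by
    rw [cins]; simp; omega
  have hnt : (m+1) ∉ l.take (i-1) := by
    intro hx
    have := symm_mem h (List.mem_of_mem_take hx)
    omega
  rw [pdel, hlc, cins, hlen, List.erase_append, if_neg hnt, List.erase_cons_head]
  exact List.take_append_drop _ _

/-- Characterization of right jumps of the largest value. -/
lemma jump_max_right {m : ℕ} {π' : List ℕ} (hπ' : π' ∈ SymmList m) {i d : ℕ}
    (hi1 : 1 ≤ i) (hiN : i ≤ m + 1) {ρ : List ℕ} :
    RightJump (cins i π') ρ (m + 1) d ↔ (0 < d ∧ d ≤ m + 1 - i ∧ ρ = cins (i + d) π') := by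
  have hlen := symm_length hπ'
  have hmem : ∀ x ∈ π', x < m + 1 := fun x hx => by have := symm_mem hπ' hx; omega
  have htl : (π'.take (i-1)).length = i - 1 := by
    rw [List.length_take]; omega
  have hdl : (π'.drop (i-1)).length = m - (i-1) := by
    rw [List.length_drop, hlen]
  have hnT : (m+1) ∉ π'.take (i-1) := fun hx => by
    have := hmem _ (List.mem_of_mem_take hx); omega
  have key : ∀ d0 : ℕ, 0 < d0 → d0 ≤ m + 1 - i →
      cins (i + d0) π' = π'.take (i-1) ++ (((π'.drop (i-1)).take d0) ++
        (m+1) :: ((π'.drop (i-1)).drop d0)) := by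
    intro d0 _ hd0
    rw [cins, hlen]
    have h1 : i + d0 - 1 = (i - 1) + d0 := by omega
    rw [h1, List.take_add, ← List.drop_drop]
    have h2 : (i-1) + d0 = d0 + (i-1) := by omega
    simp [List.append_assoc]
  constructor
  · rintro ⟨hd, A, B, C, hB, hBlt, hπ, hρ⟩
    have hnA : (m+1) ∉ A := by
      intro hx
      have hnd : (cins i π').Nodup := symm_nodup (cins_mem_symm hπ')
      rw [hπ] at hnd
      rcases List.nodup_append.1 hnd with ⟨-, -, hdisj⟩
      exact hdisj _ hx _ List.mem_cons_self rfl
    rw [cins, hlen] at hπ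
    obtain ⟨hA, hBC⟩ := append_cons_eq hπ hnT hnA
    -- hA : take (i-1) = A, hBC : drop (i-1) = B ++ C
    have hdle : d ≤ m + 1 - i := by
      have : (B ++ C).length = m - (i-1) := by rw [← hBC, hdl]
      rw [List.length_append, hB] at this
      omega
    refine ⟨hd, hdle, ?_⟩
    have hBeq : B = (π'.drop (i-1)).take d := by
      rw [hBC, ← hB, List.take_left]
    have hCeq : C = (π'.drop (i-1)).drop d := by
      rw [hBC, ← hB, List.drop_left]
    rw [key d hd hdle, hρ, hA, hBeq, hCeq]
  · rintro ⟨hd, hdle, hρ⟩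
    refine ⟨hd, π'.take (i-1), (π'.drop (i-1)).take d, (π'.drop (i-1)).drop d, ?_, ?_, ?_, ?_⟩
    · rw [List.length_take]; omega
    · intro x hx
      exact hmem x (List.mem_of_mem_drop (List.mem_of_mem_take hx))
    · rw [cins, hlen, List.take_append_drop]
    · rw [hρ, key d hd hdle]

/-- Characterization of left jumps of the largest value. -/
lemma jump_max_left {m : ℕ} {π' : List ℕ} (hπ' : π' ∈ SymmList m) {i d : ℕ}
    (hi1 : 1 ≤ i) (hiN : i ≤ m + 1) {ρ : List ℕ} :
    LeftJump (cins i π') ρ (m + 1) d ↔ (0 < d ∧ d ≤ i - 1 ∧ ρ = cins (i - d) π') := by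
  have hlen := symm_length hπ'
  have hmem : ∀ x ∈ π', x < m + 1 := fun x hx => by have := symm_mem hπ' hx; omega
  have hnT : ∀ k, (m+1) ∉ π'.take k := fun k hx => by
    have := hmem _ (List.mem_of_mem_take hx); omega
  constructor
  · rintro ⟨hd, A, B, C, hB, hBlt, hρ, hπ⟩
    -- hρ : ρ = A ++ (m+1) :: (B ++ C), hπ : cins i π' = A ++ (B ++ (m+1) :: C)
    have hnAB : (m+1) ∉ A ++ B := by
      intro hx
      have hnd : (cins i π').Nodup := symm_nodup (cins_mem_symm hπ')
      rw [hπ, ← List.append_assoc] at hnd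
      rcases List.nodup_append.1 hnd with ⟨-, -, hdisj⟩
      exact hdisj _ hx _ List.mem_cons_self rfl
    rw [cins, hlen, ← List.append_assoc] at hπ
    obtain ⟨hAB, hC⟩ := append_cons_eq hπ (hnT _) hnAB
    -- hAB : take (i-1) = A ++ B, hC : drop (i-1) = C
    have hABl : (A ++ B).length = i - 1 := by rw [← hAB, List.length_take]; omega
    rw [List.length_append, hB] at hABl
    have hdle : d ≤ i - 1 := by omega
    refine ⟨hd, hdle, ?_⟩
    have hAeq : A = π'.take (i - 1 - d) := by
      have h0 : A = (A ++ B).take A.length := (List.take_left (l₁ := A) (l₂ := B)).symm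
      rw [h0, ← hAB, List.take_take]
      congr 1
      omega
    have hlt : (π'.take (i-1)).length = i - 1 := by rw [List.length_take]; omega
    have hBeq : B = (π'.take (i-1)).drop (i - 1 - d) := by
      have h1 : B = (A ++ B).drop A.length := (List.drop_left (l₁ := A) (l₂ := B)).symm
      rw [h1, ← hAB]
      congr 1
      omega
    have hBCeq : B ++ C = π'.drop (i - 1 - d) := by
      conv_rhs => rw [← List.take_append_drop (i-1) π']
      rw [List.drop_append, hlt]
      have h0 : i - 1 - d - (i-1) = 0 := by omega
      rw [h0, List.drop_zero, hBeq, hC]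
    rw [hρ, hAeq, cins, hlen]
    have h1 : i - d - 1 = i - 1 - d := by omega
    rw [h1, hBCeq]
  · rintro ⟨hd, hdle, hρ⟩
    have hlt : (π'.take (i-1)).length = i - 1 := by rw [List.length_take]; omega
    have hsplit : (π'.take (i-1)).drop (i-1-d) ++ π'.drop (i-1) = π'.drop (i - 1 - d) := by
      conv_rhs => rw [← List.take_append_drop (i-1) π']
      rw [List.drop_append, hlt]
      have h0 : i - 1 - d - (i-1) = 0 := by omega
      rw [h0, List.drop_zero]
    have htt : π'.take (i-1-d) ++ (π'.take (i-1)).drop (i-1-d) = π'.take (i-1) := by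
      have h5 := List.take_append_drop (i-1-d) (π'.take (i-1))
      rw [List.take_take] at h5
      have h4 : min (i-1-d) (i-1) = i - 1 - d := by omega
      rw [h4] at h5
      exact h5
    refine ⟨hd, π'.take (i - 1 - d), (π'.take (i-1)).drop (i - 1 - d), π'.drop (i-1), ?_, ?_, ?_, ?_⟩
    · rw [List.length_drop, hlt]; omega
    · intro x hx
      exact hmem x (List.mem_of_mem_take (List.mem_of_mem_drop hx))
    · rw [hρ, cins, hlen]
      have h1 : i - d - 1 = i - 1 - d := by omega
      rw [h1, hsplit]
    · rw [cins, hlen, ← List.append_assoc, htt]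


lemma rj_rev {π ρ : List ℕ} {v d : ℕ} (h : RightJump π ρ v d) :
    RightJump ρ.reverse π.reverse v d := by
  obtain ⟨hd, A, B, C, hB, hBlt, hπ, hρ⟩ := h
  refine ⟨hd, C.reverse, B.reverse, A.reverse, by simp [hB], fun x hx => hBlt x (by simpa using hx), ?_, ?_⟩
  · rw [hρ]; simp
  · rw [hπ]; simp

lemma rj_reverse_iff {π ρ : List ℕ} {v d : ℕ} :
    RightJump π ρ v d ↔ RightJump ρ.reverse π.reverse v d := by
  constructor
  · exact rj_rev
  · intro h
    have := rj_rev h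
    simpa using this

lemma rj_cons {v w d : ℕ} (hv : v < w) {π ρ : List ℕ} :
    RightJump (w :: π) ρ v d ↔ ∃ ρ₀, ρ = w :: ρ₀ ∧ RightJump π ρ₀ v d := by
  constructor
  · rintro ⟨hd, A, B, C, hB, hBlt, hπ, hρ⟩
    cases A with
    | nil =>
      simp only [List.nil_append, List.cons.injEq] at hπ
      omega
    | cons a A₀ =>
      simp only [List.cons_append, List.cons.injEq] at hπ
      refine ⟨A₀ ++ (B ++ v :: C), by rw [hρ, ← hπ.1]; simp, hd, A₀, B, C, hB, hBlt, hπ.2, rfl⟩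
  · rintro ⟨ρ₀, hρ, hd, A, B, C, hB, hBlt, hπ, hρ₀⟩
    exact ⟨hd, w :: A, B, C, hB, hBlt, by rw [hπ]; rfl, by rw [hρ, hρ₀]; rfl⟩

lemma rj_cons_target {v w d : ℕ} (hv : v < w) {π ρ : List ℕ} :
    RightJump π (w :: ρ) v d ↔ ∃ π₀, π = w :: π₀ ∧ RightJump π₀ ρ v d := by
  constructor
  · rintro ⟨hd, A, B, C, hB, hBlt, hπ, hρ⟩
    cases A with
    | nil =>
      cases B with
      | nil => simp at hB; omega
      | cons b B₀ =>
        simp only [List.nil_append, List.cons_append, List.cons.injEq] at hρ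
        have := hBlt b List.mem_cons_self
        omega
    | cons a A₀ =>
      simp only [List.cons_append, List.cons.injEq] at hρ
      refine ⟨A₀ ++ v :: (B ++ C), by rw [hπ, ← hρ.1]; rfl, hd, A₀, B, C, hB, hBlt, rfl, hρ.2⟩
  · rintro ⟨π₀, hπ, hd, A, B, C, hB, hBlt, hπ₀, hρ⟩
    exact ⟨hd, w :: A, B, C, hB, hBlt, by rw [hπ, hπ₀]; rfl, by rw [hρ]; rfl⟩

lemma rj_concat {v w d : ℕ} (hv : v < w) {π ρ : List ℕ} :
    RightJump (π ++ [w]) ρ v d ↔ ∃ ρ₀, ρ = ρ₀ ++ [w] ∧ RightJump π ρ₀ v d := by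
  rw [rj_reverse_iff]
  have h1 : (π ++ [w]).reverse = w :: π.reverse := by simp
  rw [h1, rj_cons_target hv]
  constructor
  · rintro ⟨X, hX, hj⟩
    refine ⟨X.reverse, ?_, ?_⟩
    · have : ρ = ρ.reverse.reverse := by simp
      rw [this, hX]; simp
    · have := rj_rev hj
      simpa using this
  · rintro ⟨ρ₀, hρ, hj⟩
    refine ⟨ρ₀.reverse, by rw [hρ]; simp, ?_⟩
    have := rj_rev hj
    simpa using this

lemma rj_concat_target {v w d : ℕ} (hv : v < w) {π ρ : List ℕ} :
    RightJump π (ρ ++ [w]) v d ↔ ∃ π₀, π = π₀ ++ [w] ∧ RightJump π₀ ρ v d := by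
  rw [rj_reverse_iff]
  have h1 : (ρ ++ [w]).reverse = w :: ρ.reverse := by simp
  rw [h1, rj_cons hv]
  constructor
  · rintro ⟨X, hX, hj⟩
    refine ⟨X.reverse, ?_, ?_⟩
    · have : π = π.reverse.reverse := by simp
      rw [this, hX]; simp
    · have := rj_rev hj
      simpa using this
  · rintro ⟨π₀, hπ, hj⟩
    refine ⟨π₀.reverse, by rw [hπ]; simp, ?_⟩
    have := rj_rev hj
    simpa using this

lemma lj_cons {v w d : ℕ} (hv : v < w) {π ρ : List ℕ} :
    LeftJump (w :: π) ρ v d ↔ ∃ ρ₀, ρ = w :: ρ₀ ∧ LeftJump π ρ₀ v d :=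
  rj_cons_target hv

lemma lj_concat {v w d : ℕ} (hv : v < w) {π ρ : List ℕ} :
    LeftJump (π ++ [w]) ρ v d ↔ ∃ ρ₀, ρ = ρ₀ ++ [w] ∧ LeftJump π ρ₀ v d :=
  rj_concat_target hv

lemma atLeftTurn_cons {v w : ℕ} (hv : v < w) {π : List ℕ} :
    AtLeftTurn (w :: π) v ↔ AtLeftTurn π v := by
  constructor
  · rintro ⟨A, B, heq, hcond⟩
    cases A with
    | nil => simp only [List.nil_append, List.cons.injEq] at heq; omega
    | cons a A₀ =>
      simp only [List.cons_append, List.cons.injEq] at heq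
      refine ⟨A₀, B, heq.2, ?_⟩
      cases A₀ with
      | nil => exact Or.inl rfl
      | cons b t =>
        rcases hcond with h | ⟨x, hgl, hlt⟩
        · simp at h
        · rw [List.getLast?_cons_cons] at hgl
          exact Or.inr ⟨x, hgl, hlt⟩
  · rintro ⟨A, B, heq, hcond⟩
    refine ⟨w :: A, B, by rw [heq]; rfl, ?_⟩
    rcases hcond with h | ⟨x, hgl, hlt⟩
    · subst h
      exact Or.inr ⟨w, rfl, hv⟩
    · cases A with
      | nil => simp at hgl
      | cons b t => exact Or.inr ⟨x, by rw [List.getLast?_cons_cons]; exact hgl, hlt⟩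

lemma atRightTurn_cons {v w : ℕ} (hv : v < w) {π : List ℕ} :
    AtRightTurn (w :: π) v ↔ AtRightTurn π v := by
  constructor
  · rintro ⟨A, B, heq, hcond⟩
    cases A with
    | nil => simp only [List.nil_append, List.cons.injEq] at heq; omega
    | cons a A₀ =>
      simp only [List.cons_append, List.cons.injEq] at heq
      exact ⟨A₀, B, heq.2, hcond⟩
  · rintro ⟨A, B, heq, hcond⟩
    exact ⟨w :: A, B, by rw [heq]; rfl, hcond⟩

lemma atLeftTurn_reverse {v : ℕ} {l : List ℕ} :
    AtLeftTurn l v ↔ AtRightTurn l.reverse v := by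
  constructor
  · rintro ⟨A, B, heq, hcond⟩
    refine ⟨B.reverse, A.reverse, by rw [heq]; simp, ?_⟩
    rcases hcond with h | ⟨x, hgl, hlt⟩
    · exact Or.inl (by rw [h]; rfl)
    · exact Or.inr ⟨x, by rw [List.head?_reverse]; exact hgl, hlt⟩
  · rintro ⟨A, B, heq, hcond⟩
    refine ⟨B.reverse, A.reverse, ?_, ?_⟩
    · have : l = l.reverse.reverse := by simp
      rw [this, heq]; simp
    · rcases hcond with h | ⟨x, hgl, hlt⟩
      · exact Or.inl (by rw [h]; rfl)
      · refine Or.inr ⟨x, ?_, hlt⟩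
        rw [List.getLast?_reverse]
        exact hgl

lemma atRightTurn_reverse {v : ℕ} {l : List ℕ} :
    AtRightTurn l v ↔ AtLeftTurn l.reverse v := by
  rw [atLeftTurn_reverse]
  simp

lemma atLeftTurn_concat {v w : ℕ} (hv : v < w) {π : List ℕ} :
    AtLeftTurn (π ++ [w]) v ↔ AtLeftTurn π v := by
  rw [atLeftTurn_reverse, atLeftTurn_reverse (l := π)]
  have h1 : (π ++ [w]).reverse = w :: π.reverse := by simp
  rw [h1, atRightTurn_cons hv]

lemma atRightTurn_concat {v w : ℕ} (hv : v < w) {π : List ℕ} :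
    AtRightTurn (π ++ [w]) v ↔ AtRightTurn π v := by
  rw [atRightTurn_reverse, atRightTurn_reverse (l := π)]
  have h1 : (π ++ [w]).reverse = w :: π.reverse := by simp
  rw [h1, atLeftTurn_cons hv]

lemma atLeftTurn_cins {m i : ℕ} {π' : List ℕ} (hπ' : π' ∈ SymmList m)
    (hi1 : 1 ≤ i) (hiN : i ≤ m + 1) : AtLeftTurn (cins i π') (m + 1) ↔ i = 1 := by
  have hlen := symm_length hπ'
  have hmem : ∀ x ∈ π', x < m + 1 := fun x hx => by have := symm_mem hπ' hx; omega
  have hnT : (m+1) ∉ π'.take (i-1) := fun hx => by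
    have := hmem _ (List.mem_of_mem_take hx); omega
  constructor
  · rintro ⟨A, B, heq, hcond⟩
    have hnA : (m+1) ∉ A := by
      intro hx
      have hnd : (cins i π').Nodup := symm_nodup (cins_mem_symm hπ')
      rw [heq] at hnd
      rcases List.nodup_append.1 hnd with ⟨-, -, hdisj⟩
      exact hdisj _ hx _ List.mem_cons_self rfl
    rw [cins, hlen] at heq
    obtain ⟨hA, -⟩ := append_cons_eq heq hnT hnA
    rcases hcond with h | ⟨x, hgl, hlt⟩
    · rw [h] at hA
      have h2 : (π'.take (i-1)).length = i - 1 := by rw [List.length_take]; omega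
      rw [hA] at h2
      simp at h2
      omega
    · have hxA : x ∈ A := List.mem_of_mem_getLast? hgl
      rw [← hA] at hxA
      have := hmem _ (List.mem_of_mem_take hxA)
      omega
  · intro hi
    subst hi
    exact ⟨[], π', by rw [cins_one, hlen]; rfl, Or.inl rfl⟩

lemma atRightTurn_cins {m i : ℕ} {π' : List ℕ} (hπ' : π' ∈ SymmList m)
    (hi1 : 1 ≤ i) (hiN : i ≤ m + 1) : AtRightTurn (cins i π') (m + 1) ↔ i = m + 1 := by
  have hlen := symm_length hπ'
  have hmem : ∀ x ∈ π', x < m + 1 := fun x hx => by have := symm_mem hπ' hx; omega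
  have hnT : (m+1) ∉ π'.take (i-1) := fun hx => by
    have := hmem _ (List.mem_of_mem_take hx); omega
  constructor
  · rintro ⟨A, B, heq, hcond⟩
    have hnA : (m+1) ∉ A := by
      intro hx
      have hnd : (cins i π').Nodup := symm_nodup (cins_mem_symm hπ')
      rw [heq] at hnd
      rcases List.nodup_append.1 hnd with ⟨-, -, hdisj⟩
      exact hdisj _ hx _ List.mem_cons_self rfl
    rw [cins, hlen] at heq
    obtain ⟨-, hB⟩ := append_cons_eq heq hnT hnA
    rcases hcond with h | ⟨x, hgl, hlt⟩
    · rw [h] at hB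
      have h2 : (π'.drop (i-1)).length = 0 := by rw [hB]; simp
      rw [List.length_drop, hlen] at h2
      omega
    · have hxB : x ∈ B := List.mem_of_mem_head? hgl
      rw [← hB] at hxB
      have := hmem _ (List.mem_of_mem_drop hxB)
      omega
  · intro hi
    subst hi
    have : m + 1 - 1 = m := by omega
    exact ⟨π', [], by rw [cins, hlen, this, List.take_of_length_le hlen.le, List.drop_eq_nil_of_le hlen.le], Or.inl rfl⟩


noncomputable def posList (L : Set (List ℕ)) (N : ℕ) (π' : List ℕ) : List ℕ :=
  (List.range' 1 N).filter (fun i => @decide (cins i π' ∈ L) (Classical.propDecidable _))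

lemma cSeq_eq_posList {L : Set (List ℕ)} {N : ℕ} {π' : List ℕ} :
    cSeq L N π' = (posList L N π').map (fun i => cins i π') := by
  rw [cSeq, posList, List.filter_map]
  rfl

lemma posList_mem {L : Set (List ℕ)} {N : ℕ} {π' : List ℕ} {q : ℕ}
    (hq : q ∈ posList L N π') : 1 ≤ q ∧ q ≤ N ∧ cins q π' ∈ L := by
  rw [posList, List.mem_filter, List.mem_range'_1] at hq
  exact ⟨by omega, by omega, @of_decide_eq_true _ (Classical.propDecidable _) hq.2⟩

lemma posList_cons {L : Set (List ℕ)} {N : ℕ} {π' : List ℕ}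
    (h1 : cins 1 π' ∈ L) (hN : 1 ≤ N) : ∃ rest, posList L N π' = 1 :: rest := by
  obtain ⟨n, rfl⟩ : ∃ n, N = n + 1 := ⟨N - 1, by omega⟩
  rw [posList, List.range'_succ, List.filter_cons, if_pos (@decide_eq_true _ (Classical.propDecidable _) h1)]
  exact ⟨_, rfl⟩

lemma posList_getLast {L : Set (List ℕ)} {N : ℕ} {π' : List ℕ}
    (hN : cins N π' ∈ L) (h1 : 1 ≤ N) : (posList L N π').getLast? = some N := by
  obtain ⟨n, rfl⟩ : ∃ n, N = n + 1 := ⟨N - 1, by omega⟩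
  rw [posList, List.range'_concat, List.filter_append]
  have h2 : 1 + 1 * n = n + 1 := by omega
  rw [h2, List.filter_cons, if_pos (@decide_eq_true _ (Classical.propDecidable _) hN)]
  simp only [List.filter_nil]
  exact List.getLast?_concat

lemma filter_range'_chain (f : ℕ → Bool) :
    ∀ (n s : ℕ), List.Chain' (fun q q' => q < q' ∧ ∀ r, q < r → r < q' → f r = false)
      ((List.range' s n).filter f) ∧
      (∀ q, (((List.range' s n).filter f).head? = some q) → ∀ r, s ≤ r → r < q → f r = false) := by
  intro n
  induction n with
  | zero => intro s; simp [List.Chain']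
  | succ n ih =>
    intro s
    rw [List.range'_succ, List.filter_cons]
    by_cases hf : f s
    · rw [if_pos hf]
      have hmem : ∀ y ∈ ((List.range' (s+1) n).filter f).head?, s < y ∧
          (∀ r, s < r → r < y → f r = false) := by
        intro y hy
        have hy' : y ∈ (List.range' (s+1) n).filter f := List.mem_of_mem_head? hy
        rw [List.mem_filter, List.mem_range'_1] at hy'
        refine ⟨by omega, fun r h1 h2 => (ih (s+1)).2 y hy r (by omega) h2⟩
      constructor
      · rw [List.Chain', List.isChain_cons]
        exact ⟨fun y hy => (hmem y hy), (ih (s+1)).1⟩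
      · intro q hq r hr1 hr2
        simp only [List.head?_cons, Option.some.injEq] at hq
        omega
    · rw [if_neg hf]
      refine ⟨(ih (s+1)).1, fun q hq r hr1 hr2 => ?_⟩
      rcases Nat.eq_or_lt_of_le hr1 with h | h
      · subst h; simpa using hf
      · exact (ih (s+1)).2 q hq r (by omega) hr2

lemma posList_chain {L : Set (List ℕ)} {N : ℕ} {π' : List ℕ} :
    List.Chain' (fun q q' => q < q' ∧ ∀ r, q < r → r < q' → cins r π' ∉ L) (posList L N π') := by
  have h := (filter_range'_chain
    (fun i => @decide (cins i π' ∈ L) (Classical.propDecidable _)) N 1).1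
  refine h.imp (fun a b hab => ⟨hab.1, fun r h1 h2 hL => ?_⟩)
  have := hab.2 r h1 h2
  rw [@decide_eq_false_iff_not _ (Classical.propDecidable _)] at this
  exact this hL


end ZZ


namespace ZZ

def Ast (N : ℕ) (dir : Bool) (τ : MState) (q : ℕ) : MState :=
  ⟨cins q τ.perm, fun j => if j = N then dir else τ.o j, fun j => if j = N then N else τ.s j⟩

def Bst (N : ℕ) (dir : Bool) (τ : MState) (q : ℕ) : MState :=
  ⟨cins q τ.perm, fun j => if j = N then !dir else τ.o j,
   fun j => if j = N then τ.s (N - 1) else if j = N - 1 then N - 1 else τ.s j⟩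

section Steps

variable {m : ℕ} {L : Set (List ℕ)} {τ : MState}

/-- Within-block step to a non-final position, left direction. -/
lemma step_inner_L_A (hπ : τ.perm ∈ SymmList m) {q q' : ℕ} (h1 : 1 ≤ q') (hlt : q' < q) (hN : q ≤ m + 1)
    (hqL : cins q' τ.perm ∈ L)
    (hbet : ∀ r, q' < r → r < q → cins r τ.perm ∉ L) (hq'1 : q' ≠ 1) :
    MStep L (m + 1) (Ast (m+1) false τ q) (Ast (m+1) false τ q') := by
  have hsn : (Ast (m+1) false τ q).s (m+1) = m+1 := by simp [Ast]
  have hso : (Ast (m+1) false τ q).o (m+1) = false := by simp [Ast]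
  refine ⟨by rw [hsn]; omega, hqL, ?_, ?_, ?_⟩
  · rw [hsn]
    refine Or.inl ⟨hso, q - q', ?_, ?_⟩
    · rw [show (Ast (m+1) false τ q).perm = cins q τ.perm from rfl,
        show (Ast (m+1) false τ q').perm = cins q' τ.perm from rfl]
      rw [(jump_max_left hπ (by omega) hN)]
      refine ⟨by omega, by omega, ?_⟩
      have : q - (q - q') = q' := by omega
      rw [this]
    · intro d' ρ' hd' hjump
      rw [show (Ast (m+1) false τ q).perm = cins q τ.perm from rfl] at hjump
      rw [jump_max_left hπ (by omega) hN] at hjump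
      obtain ⟨hd0, -, rfl⟩ := hjump
      exact hbet (q - d') (by omega) (by omega)
  · rw [hsn]
    rintro (⟨-, hturn⟩ | ⟨hob, -⟩)
    · rw [show (Ast (m+1) false τ q').perm = cins q' τ.perm from rfl,
        atLeftTurn_cins hπ (by omega) (by omega)] at hturn
      exact absurd hturn hq'1
    · rw [hso] at hob; exact absurd hob (by simp)
  · intro _
    constructor
    · rfl
    · funext j
      rw [Function.update_apply]
      by_cases hj : j = m + 1 <;> simp [Ast, hj]

/-- Within-block step to the final position `1`, left direction. -/
lemma step_inner_L_B (hπ : τ.perm ∈ SymmList m) {q : ℕ} (hlt : 1 < q) (hN : q ≤ m + 1)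
    (hqL : cins 1 τ.perm ∈ L)
    (hbet : ∀ r, 1 < r → r < q → cins r τ.perm ∉ L) :
    MStep L (m + 1) (Ast (m+1) false τ q) (Bst (m+1) false τ 1) := by
  have hsn : (Ast (m+1) false τ q).s (m+1) = m+1 := by simp [Ast]
  have hso : (Ast (m+1) false τ q).o (m+1) = false := by simp [Ast]
  have hturn : AtLeftTurn (Bst (m+1) false τ 1).perm (m+1) := by
    rw [show (Bst (m+1) false τ 1).perm = cins 1 τ.perm from rfl,
      atLeftTurn_cins hπ (by omega) (by omega)]
  refine ⟨by rw [hsn]; omega, hqL, ?_, ?_, ?_⟩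
  · rw [hsn]
    refine Or.inl ⟨hso, q - 1, ?_, ?_⟩
    · rw [show (Ast (m+1) false τ q).perm = cins q τ.perm from rfl,
        show (Bst (m+1) false τ 1).perm = cins 1 τ.perm from rfl]
      rw [(jump_max_left hπ (by omega) hN)]
      refine ⟨by omega, by omega, ?_⟩
      have : q - (q - 1) = 1 := by omega
      rw [this]
    · intro d' ρ' hd' hjump
      rw [show (Ast (m+1) false τ q).perm = cins q τ.perm from rfl] at hjump
      rw [jump_max_left hπ (by omega) hN] at hjump
      obtain ⟨hd0, -, rfl⟩ := hjump
      exact hbet (q - d') (by omega) (by omega)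
  · rw [hsn]
    intro _
    constructor
    · funext j
      rw [Function.update_apply]
      by_cases hj : j = m + 1 <;> simp [Ast, Bst, hj, hso]
    · funext j
      simp only [Function.update_apply, hsn]
      have e1 : m + 1 - 1 = m := by omega
      by_cases hj1 : j = m
      · simp [Ast, Bst, hj1, e1]
      · by_cases hj2 : j = m + 1 <;> simp [Ast, Bst, hj1, hj2, e1]
  · rw [hsn]
    intro hcon
    exact absurd (Or.inl ⟨hso, hturn⟩) hcon

/-- Within-block step to a non-final position, right direction. -/
lemma step_inner_R_A (hπ : τ.perm ∈ SymmList m) {q q' : ℕ} (h1 : 1 ≤ q) (hlt : q < q') (hN : q' ≤ m + 1)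
    (hqL : cins q' τ.perm ∈ L)
    (hbet : ∀ r, q < r → r < q' → cins r τ.perm ∉ L) (hq'N : q' ≠ m + 1) :
    MStep L (m + 1) (Ast (m+1) true τ q) (Ast (m+1) true τ q') := by
  have hsn : (Ast (m+1) true τ q).s (m+1) = m+1 := by simp [Ast]
  have hso : (Ast (m+1) true τ q).o (m+1) = true := by simp [Ast]
  refine ⟨by rw [hsn]; omega, hqL, ?_, ?_, ?_⟩
  · rw [hsn]
    refine Or.inr ⟨hso, q' - q, ?_, ?_⟩
    · rw [show (Ast (m+1) true τ q).perm = cins q τ.perm from rfl,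
        show (Ast (m+1) true τ q').perm = cins q' τ.perm from rfl]
      rw [(jump_max_right hπ h1 (by omega))]
      refine ⟨by omega, by omega, ?_⟩
      have : q + (q' - q) = q' := by omega
      rw [this]
    · intro d' ρ' hd' hjump
      rw [show (Ast (m+1) true τ q).perm = cins q τ.perm from rfl] at hjump
      rw [jump_max_right hπ h1 (by omega)] at hjump
      obtain ⟨hd0, -, rfl⟩ := hjump
      exact hbet (q + d') (by omega) (by omega)
  · rw [hsn]
    rintro (⟨hob, -⟩ | ⟨-, hturn⟩)
    · rw [hso] at hob; exact absurd hob (by simp)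
    · rw [show (Ast (m+1) true τ q').perm = cins q' τ.perm from rfl,
        atRightTurn_cins hπ (by omega) (by omega)] at hturn
      exact absurd hturn hq'N
  · intro _
    constructor
    · rfl
    · funext j
      rw [Function.update_apply]
      by_cases hj : j = m + 1 <;> simp [Ast, hj]

/-- Within-block step to the final position `m+1`, right direction. -/
lemma step_inner_R_B (hπ : τ.perm ∈ SymmList m) {q : ℕ} (h1 : 1 ≤ q) (hlt : q < m + 1)
    (hqL : cins (m+1) τ.perm ∈ L)
    (hbet : ∀ r, q < r → r < m + 1 → cins r τ.perm ∉ L) :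
    MStep L (m + 1) (Ast (m+1) true τ q) (Bst (m+1) true τ (m+1)) := by
  have hsn : (Ast (m+1) true τ q).s (m+1) = m+1 := by simp [Ast]
  have hso : (Ast (m+1) true τ q).o (m+1) = true := by simp [Ast]
  have hturn : AtRightTurn (Bst (m+1) true τ (m+1)).perm (m+1) := by
    rw [show (Bst (m+1) true τ (m+1)).perm = cins (m+1) τ.perm from rfl,
      atRightTurn_cins hπ (by omega) (by omega)]
  refine ⟨by rw [hsn]; omega, hqL, ?_, ?_, ?_⟩
  · rw [hsn]
    refine Or.inr ⟨hso, m + 1 - q, ?_, ?_⟩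
    · rw [show (Ast (m+1) true τ q).perm = cins q τ.perm from rfl,
        show (Bst (m+1) true τ (m+1)).perm = cins (m+1) τ.perm from rfl]
      rw [(jump_max_right hπ h1 (by omega))]
      refine ⟨by omega, by omega, ?_⟩
      have : q + (m + 1 - q) = m + 1 := by omega
      rw [this]
    · intro d' ρ' hd' hjump
      rw [show (Ast (m+1) true τ q).perm = cins q τ.perm from rfl] at hjump
      rw [jump_max_right hπ h1 (by omega)] at hjump
      obtain ⟨hd0, -, rfl⟩ := hjump
      exact hbet (q + d') (by omega) (by omega)
  · rw [hsn]
    intro _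
    constructor
    · funext j
      rw [Function.update_apply]
      by_cases hj : j = m + 1 <;> simp [Ast, Bst, hj, hso]
    · funext j
      simp only [Function.update_apply, hsn]
      have e1 : m + 1 - 1 = m := by omega
      by_cases hj1 : j = m
      · simp [Ast, Bst, hj1, e1]
      · by_cases hj2 : j = m + 1 <;> simp [Ast, Bst, hj1, hj2, e1]
  · rw [hsn]
    intro hcon
    exact absurd (Or.inr ⟨hso, hturn⟩) hcon


section Lift

variable {L : Set (List ℕ)} {π ρ : List ℕ} {v d m : ℕ}

lemma symm_of_perm {l l' : List ℕ} {m : ℕ} (h : l ∈ SymmList m) (hp : l.Perm l') :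
    l' ∈ SymmList m := hp.symm.trans h

lemma pdel_cons_max {ρ₀ : List ℕ} {m : ℕ} (h : ρ₀ ∈ SymmList m) :
    pdel ((m+1) :: ρ₀) = ρ₀ := by
  have : (m+1) :: ρ₀ = cins 1 ρ₀ := by rw [cins_one, symm_length h]
  rw [this, pdel_cins h]

lemma pdel_concat_max {ρ₀ : List ℕ} {m : ℕ} (h : ρ₀ ∈ SymmList m) :
    pdel (ρ₀ ++ [m+1]) = ρ₀ := by
  have : ρ₀ ++ [m+1] = cins (m+1) ρ₀ := (cins_top (symm_length h)).symm
  rw [this, pdel_cins h]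

lemma lift_min_left_cons (hπ : π ∈ SymmList m) (hv : v ≤ m)
    (h : MinimalLeftJump (pdel '' L) π ρ v d) :
    MinimalLeftJump L ((m+1) :: π) ((m+1) :: ρ) v d := by
  constructor
  · exact (lj_cons (show v < m+1 by omega)).2 ⟨ρ, rfl, h.1⟩
  · intro d' ρ' hd' hj hlmem
    rw [lj_cons (show v < m+1 by omega)] at hj
    obtain ⟨ρ₀, rfl, hj₀⟩ := hj
    have hρ₀ : ρ₀ ∈ SymmList m := symm_of_perm hπ (rightJump_perm hj₀)
    have hp : pdel ((m+1) :: ρ₀) = ρ₀ := pdel_cons_max hρ₀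
    exact h.2 d' ρ₀ hd' hj₀ (hp ▸ Set.mem_image_of_mem pdel hlmem)

lemma lift_min_left_concat (hπ : π ∈ SymmList m) (hv : v ≤ m)
    (h : MinimalLeftJump (pdel '' L) π ρ v d) :
    MinimalLeftJump L (π ++ [m+1]) (ρ ++ [m+1]) v d := by
  constructor
  · exact (lj_concat (show v < m+1 by omega)).2 ⟨ρ, rfl, h.1⟩
  · intro d' ρ' hd' hj hlmem
    rw [lj_concat (show v < m+1 by omega)] at hj
    obtain ⟨ρ₀, rfl, hj₀⟩ := hj
    have hρ₀ : ρ₀ ∈ SymmList m := symm_of_perm hπ (rightJump_perm hj₀)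
    have hp : pdel (ρ₀ ++ [m+1]) = ρ₀ := pdel_concat_max hρ₀
    exact h.2 d' ρ₀ hd' hj₀ (hp ▸ Set.mem_image_of_mem pdel hlmem)

lemma lift_min_right_cons (hπ : π ∈ SymmList m) (hv : v ≤ m)
    (h : MinimalRightJump (pdel '' L) π ρ v d) :
    MinimalRightJump L ((m+1) :: π) ((m+1) :: ρ) v d := by
  constructor
  · exact (rj_cons (show v < m+1 by omega)).2 ⟨ρ, rfl, h.1⟩
  · intro d' ρ' hd' hj hlmem
    rw [rj_cons (show v < m+1 by omega)] at hj
    obtain ⟨ρ₀, rfl, hj₀⟩ := hj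
    have hρ₀ : ρ₀ ∈ SymmList m := symm_of_perm hπ (rightJump_perm hj₀).symm
    have hp : pdel ((m+1) :: ρ₀) = ρ₀ := pdel_cons_max hρ₀
    exact h.2 d' ρ₀ hd' hj₀ (hp ▸ Set.mem_image_of_mem pdel hlmem)

lemma lift_min_right_concat (hπ : π ∈ SymmList m) (hv : v ≤ m)
    (h : MinimalRightJump (pdel '' L) π ρ v d) :
    MinimalRightJump L (π ++ [m+1]) (ρ ++ [m+1]) v d := by
  constructor
  · exact (rj_concat (show v < m+1 by omega)).2 ⟨ρ, rfl, h.1⟩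
  · intro d' ρ' hd' hj hlmem
    rw [rj_concat (show v < m+1 by omega)] at hj
    obtain ⟨ρ₀, rfl, hj₀⟩ := hj
    have hρ₀ : ρ₀ ∈ SymmList m := symm_of_perm hπ (rightJump_perm hj₀).symm
    have hp : pdel (ρ₀ ++ [m+1]) = ρ₀ := pdel_concat_max hρ₀
    exact h.2 d' ρ₀ hd' hj₀ (hp ▸ Set.mem_image_of_mem pdel hlmem)

end Lift

/-- The block-transition step of Algorithm M. -/
lemma step_trans {m : ℕ} {L : Set (List ℕ)} {τ τ' : MState} (dir : Bool)
    (hm : 1 ≤ m)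
    (hπ : τ.perm ∈ SymmList m) (hπ' : τ'.perm ∈ SymmList m)
    (hstep : MStep (pdel '' L) m τ τ')
    (hmemA : cins (if dir then m+1 else 1) τ'.perm ∈ L)
    (hs1 : 1 ≤ τ.s m) (hsm : τ.s m ≤ m) :
    MStep L (m+1) (Bst (m+1) dir τ (if dir then m+1 else 1))
      (Ast (m+1) (!dir) τ' (if dir then m+1 else 1)) := by
  have hj1 : τ.s m ≠ 1 := hstep.1
  have hlen : τ.perm.length = m := symm_length hπ
  have hlen' : τ'.perm.length = m := symm_length hπ'
  set q : ℕ := if dir then m+1 else 1 with hq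
  have hsn : (Bst (m+1) dir τ q).s (m+1) = τ.s m := by simp [Bst]
  have hso : (Bst (m+1) dir τ q).o (τ.s m) = τ.o (τ.s m) := by
    simp only [Bst]
    rw [if_neg (by omega)]
  have hpσ : (Bst (m+1) dir τ q).perm =
      (if dir then τ.perm ++ [m+1] else (m+1) :: τ.perm) := by
    cases dir <;> simp [Bst, hq, cins_one, cins_top hlen, hlen]
  have hpσ' : (Ast (m+1) (!dir) τ' q).perm =
      (if dir then τ'.perm ++ [m+1] else (m+1) :: τ'.perm) := by
    cases dir <;> simp [Ast, hq, cins_one, cins_top hlen', hlen']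
  have hturn_iff :
      (((Bst (m+1) dir τ q).o (τ.s m) = false ∧ AtLeftTurn (Ast (m+1) (!dir) τ' q).perm (τ.s m)) ∨
       ((Bst (m+1) dir τ q).o (τ.s m) = true ∧ AtRightTurn (Ast (m+1) (!dir) τ' q).perm (τ.s m))) ↔
      ((τ.o (τ.s m) = false ∧ AtLeftTurn τ'.perm (τ.s m)) ∨
       (τ.o (τ.s m) = true ∧ AtRightTurn τ'.perm (τ.s m))) := by
    rw [hso, hpσ']
    cases dir
    · simp only [Bool.false_eq_true, if_false, reduceIte]
      rw [atLeftTurn_cons (show τ.s m < m + 1 by omega),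
        atRightTurn_cons (show τ.s m < m + 1 by omega)]
    · simp only [Bool.false_eq_true, if_false, reduceIte]
      rw [atLeftTurn_concat (show τ.s m < m + 1 by omega),
        atRightTurn_concat (show τ.s m < m + 1 by omega)]
  refine ⟨by rw [hsn]; exact hj1, by rw [hpσ']; cases dir <;> simp_all [cins_one, cins_top hlen'] , ?_, ?_, ?_⟩
  · rw [hsn, hpσ, hpσ']
    rcases hstep.2.2.1 with ⟨ho, d, hmin⟩ | ⟨ho, d, hmin⟩
    · refine Or.inl ⟨by rw [hso]; exact ho, d, ?_⟩
      cases dir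
      · simp only [Bool.false_eq_true, if_false, reduceIte]
        exact lift_min_left_cons hπ (by omega) hmin
      · simp only [Bool.false_eq_true, if_false, reduceIte]
        exact lift_min_left_concat hπ (by omega) hmin
    · refine Or.inr ⟨by rw [hso]; exact ho, d, ?_⟩
      cases dir
      · simp only [Bool.false_eq_true, if_false, reduceIte]
        exact lift_min_right_cons hπ (by omega) hmin
      · simp only [Bool.false_eq_true, if_false, reduceIte]
        exact lift_min_right_concat hπ (by omega) hmin
  · rw [hsn]
    intro hT
    obtain ⟨ho', hs'⟩ := hstep.2.2.2.1 (hturn_iff.1 hT)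
    constructor
    · funext j
      have e1 : (Ast (m+1) (!dir) τ' q).o j = if j = m+1 then (!dir) else τ'.o j := rfl
      have e2 : (Bst (m+1) dir τ q).o j = if j = m+1 then (!dir) else τ.o j := rfl
      rw [e1, Function.update_apply, e2, ho', Function.update_apply, hso]
      split_ifs <;> first | rfl | omega
    · funext j
      have e1 : (Ast (m+1) (!dir) τ' q).s j = if j = m+1 then m+1 else τ'.s j := rfl
      have e2 : ∀ k, (Bst (m+1) dir τ q).s k =
          if k = m+1 then τ.s m else if k = m then m else τ.s k := by
        intro k
        show (if k = m+1 then τ.s (m+1-1) else if k = m+1-1 then m+1-1 else τ.s k) = _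
        norm_num
      rw [e1, hs']
      simp only [Function.update_apply, e2]
      split_ifs <;> first | rfl | omega | (congr 1; omega)
  · rw [hsn]
    intro hT
    obtain ⟨ho', hs'⟩ := hstep.2.2.2.2 (fun hc => hT (hturn_iff.2 hc))
    constructor
    · funext j
      have e1 : (Ast (m+1) (!dir) τ' q).o j = if j = m+1 then (!dir) else τ'.o j := rfl
      have e2 : (Bst (m+1) dir τ q).o j = if j = m+1 then (!dir) else τ.o j := rfl
      rw [e1, e2, ho']
    · funext j
      have e1 : (Ast (m+1) (!dir) τ' q).s j = if j = m+1 then m+1 else τ'.s j := rfl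
      have e2 : ∀ k, (Bst (m+1) dir τ q).s k =
          if k = m+1 then τ.s m else if k = m then m else τ.s k := by
        intro k
        show (if k = m+1 then τ.s (m+1-1) else if k = m+1-1 then m+1-1 else τ.s k) = _
        norm_num
      rw [e1, hs']
      simp only [Function.update_apply, e2]
      split_ifs <;> first | rfl | omega | (congr 1; omega)


def tagLast (f g : ℕ → MState) : List ℕ → List MState
  | [] => []
  | [q] => [g q]
  | q :: q' :: rest => f q :: tagLast f g (q' :: rest)

lemma tagLast_ne_nil {f g : ℕ → MState} : ∀ {Q : List ℕ}, Q ≠ [] → tagLast f g Q ≠ [] := by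
  intro Q hQ
  match Q with
  | [q] => simp [tagLast]
  | q :: q' :: rest => simp [tagLast]

lemma tagLast_map {f g : ℕ → MState} {h : ℕ → List ℕ}
    (hf : ∀ q, (f q).perm = h q) (hg : ∀ q, (g q).perm = h q) :
    ∀ Q : List ℕ, (tagLast f g Q).map MState.perm = Q.map h := by
  intro Q
  match Q with
  | [] => rfl
  | [q] => simp [tagLast, hg]
  | q :: q' :: rest =>
    rw [tagLast, List.map_cons, List.map_cons, hf, tagLast_map hf hg (q' :: rest)]

lemma tagLast_head {f g : ℕ → MState} :
    ∀ {Q : List ℕ}, 2 ≤ Q.length → (tagLast f g Q).head? = Q.head?.map f := by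
  intro Q hQ
  match Q with
  | q :: q' :: rest => rfl

lemma tagLast_getLast {f g : ℕ → MState} :
    ∀ {Q : List ℕ}, Q ≠ [] → (tagLast f g Q).getLast? = Q.getLast?.map g := by
  intro Q hQ
  match Q with
  | [q] => rfl
  | q :: q' :: rest =>
    have h2 := tagLast_getLast (f := f) (g := g) (Q := q' :: rest) (by simp)
    have hne : tagLast f g (q' :: rest) ≠ [] := tagLast_ne_nil (by simp)
    rw [List.getLast?_cons_cons, ← h2]
    show (f q :: tagLast f g (q' :: rest)).getLast? = _
    cases haux : tagLast f g (q' :: rest) with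
    | nil => exact absurd haux hne
    | cons x xs => rw [List.getLast?_cons_cons]

lemma tagLast_mem {f g : ℕ → MState} :
    ∀ {Q : List ℕ} {σ : MState}, σ ∈ tagLast f g Q → ∃ q ∈ Q, σ = f q ∨ σ = g q := by
  intro Q σ hσ
  match Q with
  | [] => simp [tagLast] at hσ
  | [q] =>
    simp [tagLast] at hσ
    exact ⟨q, by simp, Or.inr hσ⟩
  | q :: q' :: rest =>
    rw [tagLast, List.mem_cons] at hσ
    rcases hσ with h | h
    · exact ⟨q, by simp, Or.inl h⟩
    · obtain ⟨r, hr, hor⟩ := tagLast_mem h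
      exact ⟨r, by simp [hr], hor⟩

lemma tagLast_chain {S : ℕ → ℕ → Prop} {R : MState → MState → Prop} {f g : ℕ → MState} {e : ℕ}
    (hfA : ∀ a b, S a b → b ≠ e → R (f a) (f b))
    (hfB : ∀ a b, S a b → b = e → R (f a) (g b))
    (hne : ∀ a b c, S a b → S b c → b ≠ e) :
    ∀ Q : List ℕ, Q.Chain' S → Q.getLast? = some e → (tagLast f g Q).Chain' R := by
  intro Q hC hlast
  match Q with
  | [] => simp [tagLast, List.Chain']
  | [q] => simp [tagLast, List.Chain']
  | [q, q'] =>
    have hS : S q q' := List.isChain_cons_cons.1 hC |>.1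
    have he : q' = e := by simpa using hlast
    show List.Chain' R [f q, g q']
    exact List.isChain_cons_cons.2 ⟨hfB q q' hS he, List.isChain_singleton _⟩
  | q :: q' :: q'' :: rest =>
    have hS : S q q' := (List.isChain_cons_cons.1 hC).1
    have hC' : List.Chain' S (q' :: q'' :: rest) := (List.isChain_cons_cons.1 hC).2
    have hS' : S q' q'' := (List.isChain_cons_cons.1 hC').1
    have hlast' : (q' :: q'' :: rest).getLast? = some e := by
      rw [List.getLast?_cons_cons] at hlast ⊢
      exact hlast
    have hq'e : q' ≠ e := hne q q' q'' hS hS'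
    rw [tagLast]
    refine List.isChain_cons.2 ⟨?_, tagLast_chain hfA hfB hne _ hC' hlast'⟩
    intro y hy
    have hunf : tagLast f g (q' :: q'' :: rest) = f q' :: tagLast f g (q'' :: rest) := rfl
    rw [hunf] at hy
    simp only [List.head?_cons, Option.mem_def, Option.some.injEq] at hy
    rw [← hy]
    exact hfA q q' hS hq'e

lemma chain'_enrich {α : Type*} {P : α → α → Prop} {M : α → Prop} :
    ∀ {l : List α}, l.Chain' P → (∀ x ∈ l, M x) →
      l.Chain' (fun a b => P a b ∧ M a ∧ M b) := by
  intro l hC hM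
  match l with
  | [] => simp [List.Chain']
  | [a] => simp [List.Chain']
  | a :: b :: rest =>
    refine List.isChain_cons_cons.2 ⟨⟨(List.isChain_cons_cons.1 hC).1, hM a (by simp), hM b (by simp)⟩, ?_⟩
    exact chain'_enrich (List.isChain_cons_cons.1 hC).2 (fun x hx => hM x (by simp [hx]))

noncomputable def blockOf (L : Set (List ℕ)) (N : ℕ) (dir : Bool) (τ : MState) : List MState :=
  tagLast (Ast N dir τ) (Bst N dir τ)
    (if dir then posList L N τ.perm else (posList L N τ.perm).reverse)

noncomputable def buildRun (L : Set (List ℕ)) (N : ℕ) : Bool → List MState → List MState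
  | _, [] => []
  | dir, τ :: rest => blockOf L N dir τ ++ buildRun L N (!dir) rest

noncomputable def Gspec (L : Set (List ℕ)) (N : ℕ) : Bool → List (List ℕ) → List (List ℕ)
  | _, [] => []
  | dir, π' :: rest => (if dir then cSeq L N π' else (cSeq L N π').reverse) ++ Gspec L N (!dir) rest

/-- Full package of facts about one block. -/
lemma blockOf_spec {m : ℕ} {L : Set (List ℕ)} {τ : MState} (dir : Bool)
    (hm : 1 ≤ m) (hπ : τ.perm ∈ SymmList m)
    (hc1 : cins 1 τ.perm ∈ L) (hcN : cins (m+1) τ.perm ∈ L) :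
    (blockOf L (m+1) dir τ).Chain' (MStep L (m+1)) ∧
    (blockOf L (m+1) dir τ).map MState.perm =
      (if dir then cSeq L (m+1) τ.perm else (cSeq L (m+1) τ.perm).reverse) ∧
    (blockOf L (m+1) dir τ).head? = some (Ast (m+1) dir τ (if dir then 1 else m+1)) ∧
    (blockOf L (m+1) dir τ).getLast? = some (Bst (m+1) dir τ (if dir then m+1 else 1)) ∧
    (∀ σ ∈ blockOf L (m+1) dir τ, ∃ q, 1 ≤ q ∧ q ≤ m+1 ∧ cins q τ.perm ∈ L ∧
      (σ = Ast (m+1) dir τ q ∨ σ = Bst (m+1) dir τ q)) := by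
  obtain ⟨rest, hrest⟩ := posList_cons (L := L) (N := m+1) (π' := τ.perm) hc1 (by omega)
  have hglast : (posList L (m+1) τ.perm).getLast? = some (m+1) := posList_getLast hcN (by omega)
  have hlen2 : 2 ≤ (posList L (m+1) τ.perm).length := by
    rcases hrx : rest with _ | ⟨r, rest'⟩
    · rw [hrx] at hrest
      rw [hrest] at hglast
      simp at hglast
      omega
    · rw [hrest, hrx]
      simp
  have hPmem := fun q hq => posList_mem (L := L) (N := m+1) (π' := τ.perm) (q := q) hq
  have hchainP := posList_chain (L := L) (N := m+1) (π' := τ.perm)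
  have hhead : (posList L (m+1) τ.perm).head? = some 1 := by rw [hrest]; rfl
  cases dir
  · -- dir = false : reversed block, left jumps
    set Q : List ℕ := (posList L (m+1) τ.perm).reverse with hQ
    have hQhead : Q.head? = some (m+1) := by rw [hQ, List.head?_reverse]; exact hglast
    have hQlast : Q.getLast? = some 1 := by rw [hQ, List.getLast?_reverse]; exact hhead
    have hQlen : 2 ≤ Q.length := by rw [hQ, List.length_reverse]; exact hlen2
    have hQmem : ∀ q ∈ Q, 1 ≤ q ∧ q ≤ m+1 ∧ cins q τ.perm ∈ L := by
      intro q hq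
      exact hPmem q (by rwa [hQ, List.mem_reverse] at hq)
    have hQchain : Q.Chain' (fun a b => (b < a ∧ ∀ r, b < r → r < a → cins r τ.perm ∉ L) ∧
        (1 ≤ a ∧ a ≤ m+1 ∧ cins a τ.perm ∈ L) ∧ (1 ≤ b ∧ b ≤ m+1 ∧ cins b τ.perm ∈ L)) := by
      rw [hQ]
      rw [List.Chain', List.isChain_reverse]
      refine (chain'_enrich hchainP hPmem).imp ?_
      intro a b hab
      exact ⟨⟨hab.1.1, hab.1.2⟩, hab.2.2, hab.2.1⟩
    have hB : blockOf L (m+1) false τ = tagLast (Ast (m+1) false τ) (Bst (m+1) false τ) Q := by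
      rw [hQ]
      simp only [blockOf, Bool.false_eq_true, if_false]
    refine ⟨?_, ?_, ?_, ?_, ?_⟩
    · rw [hB]
      refine tagLast_chain ?_ ?_ ?_ Q hQchain hQlast
      · rintro a b ⟨⟨hba, hbet⟩, ⟨ha1, haN, haL⟩, ⟨hb1, hbN, hbL⟩⟩ hbe
        exact step_inner_L_A hπ hb1 hba haN hbL hbet hbe
      · rintro a b ⟨⟨hba, hbet⟩, ⟨ha1, haN, haL⟩, ⟨hb1, hbN, hbL⟩⟩ hbe
        subst hbe
        exact step_inner_L_B hπ hba haN hbL hbet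
      · rintro a b c ⟨⟨hba, -⟩, -, -⟩ ⟨⟨hcb, -⟩, -, ⟨hc1', -, -⟩⟩
        omega
    · rw [hB, tagLast_map (h := fun q => cins q τ.perm) (fun q => rfl) (fun q => rfl) Q, hQ, List.map_reverse,
        ← cSeq_eq_posList]
      simp
    · rw [hB, tagLast_head hQlen, hQhead]
      rfl
    · rw [hB, tagLast_getLast (by intro hn; rw [hn] at hQlen; simp at hQlen), hQlast]
      rfl
    · intro σ hσ
      rw [hB] at hσ
      obtain ⟨q, hq, hor⟩ := tagLast_mem hσ
      obtain ⟨h1, h2, h3⟩ := hQmem q hq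
      exact ⟨q, h1, h2, h3, hor⟩
  · -- dir = true : forward block, right jumps
    set Q : List ℕ := posList L (m+1) τ.perm with hQ
    have hQchain : Q.Chain' (fun a b => (a < b ∧ ∀ r, a < r → r < b → cins r τ.perm ∉ L) ∧
        (1 ≤ a ∧ a ≤ m+1 ∧ cins a τ.perm ∈ L) ∧ (1 ≤ b ∧ b ≤ m+1 ∧ cins b τ.perm ∈ L)) := by
      exact (chain'_enrich hchainP hPmem).imp (fun a b hab => ⟨⟨hab.1.1, hab.1.2⟩, hab.2.1, hab.2.2⟩)
    have hB : blockOf L (m+1) true τ = tagLast (Ast (m+1) true τ) (Bst (m+1) true τ) Q := by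
      rw [hQ]
      simp only [blockOf, reduceIte]
    refine ⟨?_, ?_, ?_, ?_, ?_⟩
    · rw [hB]
      refine tagLast_chain ?_ ?_ ?_ Q hQchain hglast
      · rintro a b ⟨⟨hab, hbet⟩, ⟨ha1, haN, haL⟩, ⟨hb1, hbN, hbL⟩⟩ hbe
        exact step_inner_R_A hπ ha1 hab hbN hbL hbet hbe
      · rintro a b ⟨⟨hab, hbet⟩, ⟨ha1, haN, haL⟩, ⟨hb1, hbN, hbL⟩⟩ hbe
        subst hbe
        exact step_inner_R_B hπ ha1 hab hbL hbet
      · rintro a b c ⟨⟨hab, -⟩, -, -⟩ ⟨⟨hbc, -⟩, -, ⟨-, hcN', -⟩⟩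
        omega
    · rw [hB, tagLast_map (h := fun q => cins q τ.perm) (fun q => rfl) (fun q => rfl) Q, hQ, ← cSeq_eq_posList]
      simp
    · rw [hB, tagLast_head hlen2, hhead]
      rfl
    · rw [hB, tagLast_getLast (by intro hn; rw [hn] at hlen2; simp at hlen2), hglast]
      rfl
    · intro σ hσ
      rw [hB] at hσ
      obtain ⟨q, hq, hor⟩ := tagLast_mem hσ
      obtain ⟨h1, h2, h3⟩ := hPmem q hq
      exact ⟨q, h1, h2, h3, hor⟩


lemma buildRun_cons {L : Set (List ℕ)} {N : ℕ} {dir : Bool} {τ : MState} {rest : List MState} :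
    buildRun L N dir (τ :: rest) = blockOf L N dir τ ++ buildRun L N (!dir) rest := rfl

/-- The glue: expanding a level-`m` run into a level-`m+1` run. -/
lemma buildRun_spec {m : ℕ} {L : Set (List ℕ)} (hm : 1 ≤ m)
    (hsub : ∀ l ∈ pdel '' L, l ∈ SymmList m)
    (hcc : ∀ l ∈ pdel '' L, cins 1 l ∈ L ∧ cins (m+1) l ∈ L) :
    ∀ (ts : List MState) (dir : Bool),
    ts.Chain' (MStep (pdel '' L) m) →
    (∀ τ ∈ ts, τ.perm ∈ pdel '' L) →
    (∀ τ ∈ ts, ∀ j, 1 ≤ j → 1 ≤ τ.s j ∧ τ.s j ≤ j) →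
    (∀ τ, ts.getLast? = some τ → τ.s m = 1) →
    ((buildRun L (m+1) dir ts).Chain' (MStep L (m+1)) ∧
     (buildRun L (m+1) dir ts).map MState.perm = Gspec L (m+1) dir (ts.map MState.perm) ∧
     (∀ σ ∈ buildRun L (m+1) dir ts, σ.perm ∈ L) ∧
     (∀ σ ∈ buildRun L (m+1) dir ts, ∀ j, 1 ≤ j → 1 ≤ σ.s j ∧ σ.s j ≤ j) ∧
     (∀ τ0, ts.head? = some τ0 →
        (buildRun L (m+1) dir ts).head? = some (Ast (m+1) dir τ0 (if dir then 1 else m+1))) ∧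
     (∀ σ, (buildRun L (m+1) dir ts).getLast? = some σ → σ.s (m+1) = 1)) := by
  intro ts
  induction ts with
  | nil =>
    intro dir _ _ _ _
    refine ⟨by simp [buildRun, List.Chain'], by simp [buildRun, Gspec], by simp [buildRun], by simp [buildRun],
      by simp, by simp [buildRun]⟩
  | cons τ rest ih =>
    intro dir hchain hmem hinv hlast
    have hτmem : τ.perm ∈ pdel '' L := hmem τ (by simp)
    have hτsym : τ.perm ∈ SymmList m := hsub _ hτmem
    obtain ⟨hc1, hcN⟩ := hcc _ hτmem
    have hτinv : ∀ j, 1 ≤ j → 1 ≤ τ.s j ∧ τ.s j ≤ j := hinv τ (by simp)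
    obtain ⟨bchain, bmap, bhead, blast, bmem⟩ := blockOf_spec dir hm hτsym hc1 hcN
    have bne : blockOf L (m+1) dir τ ≠ [] := by
      intro hn; rw [hn] at bhead; simp at bhead
    have hstate_inv : ∀ σ ∈ blockOf L (m+1) dir τ, ∀ j, 1 ≤ j → 1 ≤ σ.s j ∧ σ.s j ≤ j := by
      intro σ hσ j hj
      obtain ⟨q, -, -, -, hor⟩ := bmem σ hσ
      rcases hor with rfl | rfl
      · show 1 ≤ (if j = m+1 then m+1 else τ.s j) ∧ (if j = m+1 then m+1 else τ.s j) ≤ j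
        by_cases hjm : j = m+1
        · simp [hjm]
        · simp only [if_neg hjm]; exact hτinv j hj
      · have hBs : ∀ k, (Bst (m+1) dir τ q).s k =
            if k = m+1 then τ.s m else if k = m then m else τ.s k := by
          intro k
          show (if k = m+1 then τ.s (m+1-1) else if k = m+1-1 then m+1-1 else τ.s k) = _
          norm_num
        rw [hBs]
        by_cases hjm : j = m+1
        · have := hτinv m hm
          simp only [if_pos hjm]
          omega
        · by_cases hjm' : j = m
          · simp only [if_neg hjm, if_pos hjm']
            omega
          · simp only [if_neg hjm, if_neg hjm']
            exact hτinv j hj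
    have hstate_memL : ∀ σ ∈ blockOf L (m+1) dir τ, σ.perm ∈ L := by
      intro σ hσ
      obtain ⟨q, -, -, hqL, hor⟩ := bmem σ hσ
      rcases hor with rfl | rfl
      · exact hqL
      · exact hqL
    cases rest with
    | nil =>
      rw [buildRun_cons]
      have hbr : buildRun L (m+1) (!dir) [] = [] := rfl
      rw [hbr, List.append_nil]
      have hτlast : τ.s m = 1 := hlast τ rfl
      refine ⟨bchain, ?_, hstate_memL, hstate_inv, ?_, ?_⟩
      · rw [bmap]
        show _ = (if dir then cSeq L (m+1) τ.perm else (cSeq L (m+1) τ.perm).reverse) ++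
          Gspec L (m+1) (!dir) []
        rw [show Gspec L (m+1) (!dir) [] = [] from rfl, List.append_nil]
      · intro τ0 hτ0
        simp only [List.head?_cons, Option.some.injEq] at hτ0
        rw [← hτ0]
        exact bhead
      · intro σ hσ
        rw [blast] at hσ
        simp only [Option.some.injEq] at hσ
        rw [← hσ]
        have hBs : (Bst (m+1) dir τ (if dir then m+1 else 1)).s (m+1) = τ.s m := by
          simp [Bst]
        rw [hBs]
        exact hτlast
    | cons τ' rest' =>
      have hchain' : (τ' :: rest').Chain' (MStep (pdel '' L) m) := (List.isChain_cons_cons.1 hchain).2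
      have hstep0 : MStep (pdel '' L) m τ τ' := (List.isChain_cons_cons.1 hchain).1
      have hτ'mem : τ'.perm ∈ pdel '' L := hmem τ' (by simp)
      have hτ'sym : τ'.perm ∈ SymmList m := hsub _ hτ'mem
      obtain ⟨IH1, IH2, IH3, IH4, IH5, IH6⟩ := ih (!dir) hchain' (fun x hx => hmem x (by simp [hx]))
        (fun x hx => hinv x (by simp [hx])) (fun x hx => hlast x (by rw [← hx]; rw [List.getLast?_cons_cons]))
      have hbrhead : (buildRun L (m+1) (!dir) (τ' :: rest')).head? =
          some (Ast (m+1) (!dir) τ' (if (!dir) then 1 else m+1)) := IH5 τ' rfl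
      have hbrne : buildRun L (m+1) (!dir) (τ' :: rest') ≠ [] := by
        intro hn; rw [hn] at hbrhead; simp at hbrhead
      have hqq : (if (!dir) then (1:ℕ) else m+1) = (if dir then m+1 else 1) := by
        cases dir <;> rfl
      have hmemA : cins (if dir then m+1 else 1) τ'.perm ∈ L := by
        obtain ⟨h1, h2⟩ := hcc _ hτ'mem
        cases dir <;> simpa
      have htrans : MStep L (m+1) (Bst (m+1) dir τ (if dir then m+1 else 1))
          (Ast (m+1) (!dir) τ' (if dir then m+1 else 1)) :=
        step_trans dir hm hτsym hτ'sym hstep0 hmemA (hτinv m hm).1 (hτinv m hm).2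
      rw [buildRun_cons]
      refine ⟨?_, ?_, ?_, ?_, ?_, ?_⟩
      · rw [List.Chain', List.isChain_append]
        refine ⟨bchain, IH1, ?_⟩
        intro x hx y hy
        rw [blast] at hx
        rw [hbrhead] at hy
        simp only [Option.mem_def, Option.some.injEq] at hx hy
        rw [← hx, ← hy, hqq]
        exact htrans
      · rw [List.map_append, bmap, IH2]
        rfl
      · intro σ hσ
        rcases List.mem_append.1 hσ with h | h
        · exact hstate_memL σ h
        · exact IH3 σ h
      · intro σ hσ
        rcases List.mem_append.1 hσ with h | h
        · exact hstate_inv σ h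
        · exact IH4 σ h
      · intro τ0 hτ0
        simp only [List.head?_cons, Option.some.injEq] at hτ0
        rw [← hτ0, List.head?_append_of_ne_nil _ bne]
        exact bhead
      · intro σ hσ
        rw [List.getLast?_append] at hσ
        rcases haux : (buildRun L (m+1) (!dir) (τ' :: rest')).getLast? with _ | y
        · exact absurd haux (by
            intro hn
            exact hbrne (List.getLast?_eq_none_iff.1 hn))
        · rw [haux] at hσ
          simp only [Option.some_or, Option.some.injEq] at hσ
          rw [← hσ]
          exact IH6 y haux

end Steps


lemma zig0 {S : Set (List ℕ)} (h : IsZigzag 0 S) : S = {[]} := by cases h; rfl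

lemma zig_sub {m : ℕ} {S : Set (List ℕ)} (hm : 1 ≤ m) (h : IsZigzag m S) :
    S ⊆ SymmList m := by
  cases h with
  | zero => omega
  | succ n L h1 h2 h3 => exact h1

lemma gspec_flat {L : Set (List ℕ)} {N : ℕ} :
    ∀ (l : List (List ℕ)) (k : ℕ),
    (l.mapIdx (fun j π => if (k + j) % 2 = 0 then (cSeq L N π).reverse else cSeq L N π)).flatten
      = Gspec L N (decide (k % 2 = 1)) l := by
  intro l
  induction l with
  | nil => intro k; rfl
  | cons π rest ih =>
    intro k
    rw [List.mapIdx_cons, List.flatten_cons]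
    have h1 : (fun j (π : List ℕ) => if (k + (j + 1)) % 2 = 0
        then (cSeq L N π).reverse else cSeq L N π) =
        (fun j π => if ((k+1) + j) % 2 = 0 then (cSeq L N π).reverse else cSeq L N π) := by
      funext j π
      have : k + (j + 1) = (k + 1) + j := by omega
      rw [this]
    rw [h1, ih (k+1)]
    show _ = (if decide (k % 2 = 1) then cSeq L N π else (cSeq L N π).reverse) ++
      Gspec L N (!decide (k % 2 = 1)) rest
    have hb : decide ((k+1) % 2 = 1) = !decide (k % 2 = 1) := by
      rcases Nat.mod_two_eq_zero_or_one k with h | h <;>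
        simp [h, Nat.add_mod]
    rw [hb]
    congr 1
    rcases Nat.mod_two_eq_zero_or_one k with h | h <;> simp [h, Nat.add_mod]

lemma jseq_eq_gspec {L : Set (List ℕ)} {m : ℕ} :
    Jseq (m + 1) L = Gspec L (m + 1) false (Jseq m (pdel '' L)) := by
  show ((Jseq m (pdel '' L)).mapIdx
      (fun k π => if k % 2 = 0 then (cSeq L (m + 1) π).reverse else cSeq L (m+1) π)).flatten = _
  have h0 : (fun (k : ℕ) (π : List ℕ) => if k % 2 = 0 then (cSeq L (m + 1) π).reverse
      else cSeq L (m+1) π) = (fun k π => if (0 + k) % 2 = 0 then (cSeq L (m + 1) π).reverse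
      else cSeq L (m+1) π) := by
    funext k π
    rw [Nat.zero_add]
  rw [h0, gspec_flat]
  rfl

lemma exists_next {R : MState → MState → Prop} {n : ℕ} :
    ∀ l : List MState, l.Chain' R → (∀ y, l.getLast? = some y → y.s n = 1) →
    ∀ x ∈ l, x.s n ≠ 1 → ∃ y, R x y := by
  intro l
  induction l with
  | nil => simp
  | cons a rest ih =>
    intro hC hlastp x hx hxs
    cases rest with
    | nil =>
      simp only [List.mem_singleton] at hx
      subst hx
      exact absurd (hlastp x rfl) hxs
    | cons b rest' =>
      rcases List.mem_cons.1 hx with rfl | hx'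
      · exact ⟨b, (List.isChain_cons_cons.1 hC).1⟩
      · exact ih (List.isChain_cons_cons.1 hC).2
          (fun y hy => hlastp y (by rw [List.getLast?_cons_cons]; exact hy)) x hx' hxs

theorem mainP : ∀ m : ℕ, 1 ≤ m → ∀ L : Set (List ℕ), IsZigzag m L →
    ∃ run : List MState,
      run.head? = some (MInit m) ∧
      run.Chain' (MStep L m) ∧
      run.map MState.perm = Jseq m L ∧
      (∀ σ, run.getLast? = some σ → σ.s m = 1) ∧
      (∀ σ ∈ run, σ.perm ∈ L) ∧
      (∀ σ ∈ run, ∀ j, 1 ≤ j → 1 ≤ σ.s j ∧ σ.s j ≤ j) := by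
  intro m hm
  induction m, hm using Nat.le_induction with
  | base =>
    intro L hL
    cases hL with
    | succ n L hsub hz0 hcc =>
    have h0 : pdel '' L = {[]} := zig0 hz0
    have h1 : [1] ∈ L := by
      have := (hcc [] (by rw [h0]; rfl)).1
      simpa [cins] using this
    refine ⟨[MInit 1], rfl, List.isChain_singleton _, ?_, ?_, ?_, ?_⟩
    · have hJ : Jseq 1 L = [[1]] := by
        show ((Jseq 0 (pdel '' L)).mapIdx
          (fun k π => if k % 2 = 0 then (cSeq L 1 π).reverse else cSeq L 1 π)).flatten = _
        show (([[]] : List (List ℕ)).mapIdx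
          (fun k π => if k % 2 = 0 then (cSeq L 1 π).reverse else cSeq L 1 π)).flatten = _
        rw [List.mapIdx_cons]
        have hc : cSeq L 1 [] = [[1]] := by
          show ((List.range' 1 1).map (fun i => cins i [])).filter _ = _
          have : List.range' 1 1 = [1] := rfl
          rw [this]
          have : ([1].map (fun i => cins i [])) = [[1]] := by simp [cins]
          rw [this, List.filter_cons,
            if_pos (@decide_eq_true _ (Classical.propDecidable _) h1)]
          rfl
        simp [hc]
      rw [hJ]
      rfl
    · intro σ hσ
      simp only [List.getLast?_singleton, Option.some.injEq] at hσ
      rw [← hσ]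
      rfl
    · intro σ hσ
      simp only [List.mem_singleton] at hσ
      subst hσ
      show idPerm 1 ∈ L
      have : idPerm 1 = [1] := rfl
      rw [this]
      exact h1
    · intro σ hσ j hj
      simp only [List.mem_singleton] at hσ
      subst hσ
      exact ⟨hj, le_refl j⟩
  | succ m hm ih =>
    intro L hL
    cases hL with
    | succ n L hsub hz' hcc =>
    have hsub' : ∀ l ∈ pdel '' L, l ∈ SymmList m := fun l hl => zig_sub hm hz' hl
    obtain ⟨run', hhead', hchain', hmap', hlast', hmem', hinv'⟩ := ih (pdel '' L) hz'
    obtain ⟨G1, G2, G3, G4, G5, G6⟩ := buildRun_spec hm hsub' hcc run' false hchain'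
      hmem' hinv' hlast'
    refine ⟨buildRun L (m+1) false run', ?_, G1, ?_, G6, G3, G4⟩
    · cases run' with
      | nil => simp at hhead'
      | cons τ0 rest =>
        have hτ0 : τ0 = MInit m := by simpa using hhead'
        have := G5 τ0 rfl
        rw [this, hτ0]
        have hAeq : Ast (m+1) false (MInit m) (if false then 1 else m+1) = MInit (m+1) := by
          simp only [Ast, MInit, MState.mk.injEq, Bool.false_eq_true, if_false]
          refine ⟨?_, ?_, ?_⟩
          · show cins (m+1) (idPerm m) = idPerm (m+1)
            have hlen : (idPerm m).length = m := by simp [idPerm]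
            rw [cins_top hlen, idPerm, idPerm]
            have : List.range' 1 (m+1) = List.range' 1 m ++ [1 + 1 * m] := List.range'_concat (s := 1) (n := m)
            rw [this]
            congr 2
            omega
          · funext j
            by_cases hj : j = m + 1 <;> simp [hj]
          · funext j
            by_cases hj : j = m + 1 <;> simp [hj]
        rw [hAeq]
    · rw [G2, hmap', jseq_eq_gspec]

end ZZ




/-- For every zigzag language `L_n ⊆ S_n` with `n ≥ 1`,
Algorithm M is well defined — in every execution of step M4 the prescribed
minimal jump exists and produces a permutation of `L_n` — it terminates
(the run is a finite list of states whose last state has `s_n = 1`), and the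
permutations visited in step M2, in order, form exactly the sequence `J(L_n)`
(in particular every permutation of `L_n` is visited exactly once). -/
theorem algorithmM_correct (n : ℕ) (hn : 1 ≤ n) (L : Set (List ℕ)) (hL : IsZigzag n L) :
    ∃ run : List MState,
      run.head? = some (MInit n) ∧
      run.Chain' (MStep L n) ∧
      (∀ σ, run.getLast? = some σ → σ.s n = 1) ∧
      (∀ σ ∈ run, σ.s n ≠ 1 →
        ∃ ρ ∈ L,
          (σ.o (σ.s n) = false ∧ ∃ d, MinimalLeftJump L σ.perm ρ (σ.s n) d) ∨
          (σ.o (σ.s n) = true ∧ ∃ d, MinimalRightJump L σ.perm ρ (σ.s n) d)) ∧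
      run.map MState.perm = Jseq n L := by
  obtain ⟨run, h1, h2, h3, h4, h5, h6⟩ := ZZ.mainP n hn L hL
  refine ⟨run, h1, h2, h4, ?_, h3⟩
  intro σ hσ hs
  obtain ⟨σ', hstep⟩ := ZZ.exists_next run h2 h4 σ hσ hs
  exact ⟨σ'.perm, hstep.2.1, hstep.2.2.1⟩
end

section
/- For every n ≥ 1, the set of 2-clumped permutations satisfies S'_{n−1} = {p(π) : π ∈ S'_n}; that is, deleting the largest entry of a 2-clumped permutation of length n yields a 2-clumped permutation of length n−1, and every 2-clumped permutation of length n−1 arises in this way from some 2-clumped permutation of length n. -/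
lemma getD_mem {l : List ℕ} {p : ℕ} (h : p < l.length) : l.getD p 0 ∈ l := by
  rw [List.getD_eq_getElem l 0 h]; exact List.getElem_mem h

lemma getD_cons_pred (m : ℕ) (l : List ℕ) {p : ℕ} (hp : 0 < p) :
    (m :: l).getD p 0 = l.getD (p - 1) 0 := by
  cases p with
  | zero => omega
  | succ q => simp

lemma contains_lift_delete (pat : List ℕ) (k : ℕ) (hpl : pat.length = 5)
    (hk1 : k + 1 < 5) (hk5 : pat.getD k 0 = 5)
    (hmax : ∀ i < 5, i ≠ k → pat.getD i 0 < 5)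
    {A B : List ℕ} {m : ℕ} (hm : ∀ x ∈ A ++ B, x < m)
    (h : ContainsVincular (A ++ B) pat k) :
    ContainsVincular (A ++ m :: B) pat k := by
  obtain ⟨f, hmono, hbd, hadj, hord⟩ := h
  have hmono' : ∀ i j : ℕ, i < 5 → j < 5 → i < j → f i < f j := by
    intro i j hi hj hij
    exact hmono (by simp only [Set.mem_Iio, hpl]; omega)
      (by simp only [Set.mem_Iio, hpl]; omega) hij
  have hbd' : ∀ i < 5, f i < (A ++ B).length := fun i hi => hbd i (by omega)
  have hlen : (A ++ m :: B).length = (A ++ B).length + 1 := by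
    simp only [List.length_append, List.length_cons]; omega
  have hgval : ∀ p, (A ++ m :: B).getD (if p < A.length then p else p + 1) 0
      = (A ++ B).getD p 0 := by
    intro p
    by_cases hp : p < A.length
    · rw [if_pos hp, List.getD_append _ _ _ _ hp, List.getD_append _ _ _ _ hp]
    · push_neg at hp
      rw [if_neg (by omega), List.getD_append_right _ _ _ _ (by omega),
        List.getD_append_right _ _ _ _ hp, getD_cons_pred _ _ (by omega)]
      congr 1
      omega
  have hma : (A ++ m :: B).getD A.length 0 = m := by
    rw [List.getD_append_right _ _ _ _ (le_refl _)]
    simp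
  have hABlt : ∀ p < (A ++ B).length, (A ++ B).getD p 0 < m := fun p hp =>
    hm _ (getD_mem hp)
  by_cases hc : f k < A.length ∧ A.length ≤ f (k + 1)
  · -- m sits exactly between the marked pair; use it as the "5"
    have hfk : A.length = f k + 1 := by omega
    have hfge : ∀ j', k + 1 ≤ j' → j' < 5 → A.length ≤ f j' := by
      intro j' hj1 hj2
      rcases eq_or_lt_of_le hj1 with h' | h'
      · subst h'; omega
      · have := hmono' (k + 1) j' (by omega) hj2 h'
        omega
    refine ⟨fun i => if i = k then A.length else (if f i < A.length then f i else f i + 1),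
      ?_, ?_, ?_, ?_⟩
    · intro i hi j hj hij
      simp only [Set.mem_Iio, hpl] at hi hj
      dsimp only
      rcases eq_or_ne i k with hik | hik <;> rcases eq_or_ne j k with hjk | hjk
      · omega
      · rw [if_pos hik, if_neg hjk]
        have := hfge j (by omega) hj
        split_ifs <;> omega
      · rw [if_pos hjk, if_neg hik]
        have h1 := hmono' i j hi hj hij
        rw [hjk] at h1
        split_ifs <;> omega
      · rw [if_neg hik, if_neg hjk]
        have := hmono' i j hi hj hij
        split_ifs <;> omega
    · intro i hi
      have h1 := hbd i hi
      have h2 := hbd' k (by omega)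
      rw [hlen]
      dsimp only
      split_ifs <;> omega
    · dsimp only
      rw [if_neg (by omega : ¬ k + 1 = k), if_pos rfl,
        if_neg (by omega : ¬ f (k + 1) < A.length)]
      omega
    · intro i hi j hj
      have hi5 : i < 5 := by omega
      have hj5 : j < 5 := by omega
      dsimp only
      rcases eq_or_ne i k with hik | hik <;> rcases eq_or_ne j k with hjk | hjk
      · rw [if_pos hik, if_pos hjk, hik, hjk]
        constructor <;> intro h' <;> exact absurd h' (lt_irrefl _)
      · rw [if_pos hik, if_neg hjk, hik, hk5, hma, hgval]
        have h1 : pat.getD j 0 < 5 := hmax j hj5 hjk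
        have h2 : (A ++ B).getD (f j) 0 < m := hABlt _ (hbd j hj)
        constructor <;> intro h' <;> omega
      · rw [if_pos hjk, if_neg hik, hjk, hk5, hma, hgval]
        have h1 : pat.getD i 0 < 5 := hmax i hi5 hik
        have h2 : (A ++ B).getD (f i) 0 < m := hABlt _ (hbd i hi)
        constructor <;> intro h' <;> omega
      · rw [if_neg hik, if_neg hjk, hgval, hgval]
        exact hord i hi j hj
  · -- the marked pair stays adjacent after inserting m
    refine ⟨fun i => if f i < A.length then f i else f i + 1, ?_, ?_, ?_, ?_⟩
    · intro i hi j hj hij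
      have := hmono hi hj hij
      dsimp only
      split_ifs <;> omega
    · intro i hi
      have := hbd i hi
      rw [hlen]
      dsimp only
      split_ifs <;> omega
    · dsimp only
      rw [hadj]
      by_cases h1 : f k < A.length
      · rw [if_pos h1, if_pos (by omega : f k + 1 < A.length)]
      · rw [if_neg h1, if_neg (by omega : ¬ f k + 1 < A.length)]
    · intro i hi j hj
      dsimp only
      rw [hgval, hgval]
      exact hord i hi j hj

lemma contains_down_cons (pat : List ℕ) (k : ℕ) (hpl : pat.length = 5)
    (hk : 1 ≤ k) (hk1 : k + 1 < 5) (hk5 : pat.getD k 0 = 5)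
    (hmax : ∀ i < 5, i ≠ k → pat.getD i 0 < 5)
    {π' : List ℕ} {m : ℕ} (hm : ∀ x ∈ π', x < m)
    (h : ContainsVincular (m :: π') pat k) :
    ContainsVincular π' pat k := by
  obtain ⟨f, hmono, hbd, hadj, hord⟩ := h
  have hmono' : ∀ i j : ℕ, i < 5 → j < 5 → i < j → f i < f j := by
    intro i j hi hj hij
    exact hmono (by simp only [Set.mem_Iio, hpl]; omega)
      (by simp only [Set.mem_Iio, hpl]; omega) hij
  have hlen : (m :: π').length = π'.length + 1 := rfl
  have hpos : ∀ i < pat.length, 0 < f i := by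
    intro i hi
    by_contra h0
    have hfi : f i = 0 := by omega
    rcases eq_or_ne i k with hik | hik
    · have h1 := hmono' 0 k (by omega) (by omega) (by omega)
      rw [hik] at hfi
      omega
    · rcases lt_or_gt_of_ne hik with h' | h'
      · have hfk : f i < f k := hmono' i k (by omega) (by omega) h'
        have h5 : pat.getD i 0 < pat.getD k 0 := by
          rw [hk5]; exact hmax i (by omega) hik
        have hlt := (hord i hi k (by omega)).1 h5
        rw [hfi, List.getD_cons_zero, getD_cons_pred _ _ (by omega)] at hlt
        have hkb := hbd k (by omega)
        have : π'.getD (f k - 1) 0 < m := hm _ (getD_mem (by omega))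
        omega
      · have := hmono' k i (by omega) (by omega) h'
        omega
  have hval : ∀ i < pat.length, (m :: π').getD (f i) 0 = π'.getD (f i - 1) 0 :=
    fun i hi => getD_cons_pred _ _ (hpos i hi)
  refine ⟨fun i => f i - 1, ?_, ?_, ?_, ?_⟩
  · intro i hi j hj hij
    have h1 := hmono hi hj hij
    have h2 := hpos i hi
    dsimp only
    omega
  · intro i hi
    have h1 := hbd i hi
    have h2 := hpos i hi
    rw [hlen] at h1
    dsimp only
    omega
  · have h1 := hpos k (by omega)
    dsimp only
    omega
  · intro i hi j hj
    dsimp only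
    rw [← hval i hi, ← hval j hj]
    exact hord i hi j hj

lemma twoClumped_cons {π' : List ℕ} {m : ℕ} (hm : ∀ x ∈ π', x < m)
    (h : TwoClumped π') : TwoClumped (m :: π') := by
  obtain ⟨h1, h2, h3, h4⟩ := h
  refine ⟨fun hc => h1 ?_, fun hc => h2 ?_, fun hc => h3 ?_, fun hc => h4 ?_⟩
  · exact contains_down_cons [3,5,1,2,4] 1 rfl (by omega) (by omega) rfl (by decide) hm hc
  · exact contains_down_cons [3,5,1,4,2] 1 rfl (by omega) (by omega) rfl (by decide) hm hc
  · exact contains_down_cons [2,4,5,1,3] 2 rfl (by omega) (by omega) rfl (by decide) hm hc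
  · exact contains_down_cons [4,2,5,1,3] 2 rfl (by omega) (by omega) rfl (by decide) hm hc

lemma twoClumped_delete {A B : List ℕ} {m : ℕ} (hm : ∀ x ∈ A ++ B, x < m)
    (h : TwoClumped (A ++ m :: B)) : TwoClumped (A ++ B) := by
  obtain ⟨h1, h2, h3, h4⟩ := h
  refine ⟨fun hc => h1 ?_, fun hc => h2 ?_, fun hc => h3 ?_, fun hc => h4 ?_⟩
  · exact contains_lift_delete [3,5,1,2,4] 1 rfl (by omega) rfl (by decide) hm hc
  · exact contains_lift_delete [3,5,1,4,2] 1 rfl (by omega) rfl (by decide) hm hc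
  · exact contains_lift_delete [2,4,5,1,3] 2 rfl (by omega) rfl (by decide) hm hc
  · exact contains_lift_delete [4,2,5,1,3] 2 rfl (by omega) rfl (by decide) hm hc

lemma range'_split (n : ℕ) (hn : 1 ≤ n) :
    List.range' 1 n = List.range' 1 (n - 1) ++ [n] := by
  have h1 : n = (n - 1) + 1 := by omega
  rw [h1, List.range'_concat]
  congr 2
  omega

lemma mem_symm_lt {n : ℕ} {l : List ℕ} (h : l ∈ SymmList n) :
    ∀ x ∈ l, x < n + 1 := by
  intro x hx
  have := h.subset hx
  rw [List.mem_range'_1] at this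
  omega

/-- For every `n ≥ 1`, the set of 2-clumped permutations
satisfies `S'_{n−1} = {p(π) : π ∈ S'_n}`. -/
theorem SClump_pdel_image (n : ℕ) (hn : 1 ≤ n) :
    SClump (n - 1) = pdel '' SClump n := by
  ext π'
  constructor
  · rintro ⟨hperm, hclump⟩
    have hl' : π'.length = n - 1 := by
      simpa using hperm.length_eq
    have hmem : ∀ x ∈ π', x < n := by
      intro x hx
      have := mem_symm_lt hperm x hx
      omega
    refine ⟨n :: π', ⟨?_, twoClumped_cons hmem hclump⟩, ?_⟩
    · show (n :: π').Perm (List.range' 1 n)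
      rw [range'_split n hn]
      exact (hperm.cons n).trans (List.perm_append_singleton n _).symm
    · show (n :: π').erase (n :: π').length = π'
      rw [List.length_cons, hl', show n - 1 + 1 = n from by omega,
        List.erase_cons_head]
  · rintro ⟨π, ⟨hperm, hclump⟩, rfl⟩
    have hlen : π.length = n := by simpa using hperm.length_eq
    have hn_mem : n ∈ π := hperm.mem_iff.2 (List.mem_range'_1.2 ⟨hn, by omega⟩)
    obtain ⟨A, B, hnA, hAB, herase⟩ := List.exists_erase_eq hn_mem
    have hpd : pdel π = A ++ B := by rw [pdel, hlen, herase]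
    have hABperm : (A ++ B) ∈ SymmList (n - 1) := by
      show (A ++ B).Perm (List.range' 1 (n - 1))
      rw [← herase]
      have h1 : (π.erase n).Perm ((List.range' 1 n).erase n) := hperm.erase n
      rwa [range'_split n hn,
        List.erase_append_right _ (by rw [List.mem_range'_1]; omega),
        List.erase_cons_head, List.append_nil] at h1
    have hmlt : ∀ x ∈ A ++ B, x < n := by
      intro x hx
      have h1 := hABperm.subset hx
      rw [List.mem_range'_1] at h1
      omega
    rw [hpd]
    exact ⟨hABperm, twoClumped_delete hmlt (hAB ▸ hclump)⟩
end
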